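/- arXiv:2009.04405 — 6 statements merged into one kernel-verified Lean document; each statement's English description precedes it below -/
import Mathlib

section
/- Let A, B ∈ ℝ^{n×n}. Then every matrix in the interval hull I(A,B) is an almost P-matrix of the second category if and only if I_u and I_z are almost P-matrices of the second category for all z ∈ {±1}^n, where (I_u)_{ij} = max(a_{ij}, b_{ij}) and I_z = I_c − D_z Δ D_z with I_c = (A+B)/2, Δ = (I_u − I_l)/2. -/
open Matrix Finset

def IsPMatrix {n : ℕ} (A : Matrix (Fin n) (Fin n) ℝ) : Prop :=
  ∀ s : Finset (Fin n),
    0 < (A.submatrix (fun i : s => (i : Fin n)) (fun j : s => (j : Fin n))).det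

def IsNMatrix {n : ℕ} (A : Matrix (Fin n) (Fin n) ℝ) : Prop :=
  ∀ s : Finset (Fin n), s.Nonempty →
    (A.submatrix (fun i : s => (i : Fin n)) (fun j : s => (j : Fin n))).det < 0

def IsAlmostPMatrix {n : ℕ} (A : Matrix (Fin n) (Fin n) ℝ) : Prop :=
  (∀ s : Finset (Fin n), s.Nonempty → s ≠ Finset.univ →
    0 < (A.submatrix (fun i : s => (i : Fin n)) (fun j : s => (j : Fin n))).det) ∧
  A.det < 0

def IntervalHull {m n : ℕ} (A B : Matrix (Fin m) (Fin n) ℝ) :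
    Set (Matrix (Fin m) (Fin n) ℝ) :=
  {C | ∀ i j, ∃ t : ℝ, t ∈ Set.Icc (0:ℝ) 1 ∧ C i j = t * A i j + (1 - t) * B i j}

noncomputable def Iu {m n : ℕ} (A B : Matrix (Fin m) (Fin n) ℝ) : Matrix (Fin m) (Fin n) ℝ :=
  fun i j => max (A i j) (B i j)

noncomputable def Il {m n : ℕ} (A B : Matrix (Fin m) (Fin n) ℝ) : Matrix (Fin m) (Fin n) ℝ :=
  fun i j => min (A i j) (B i j)

noncomputable def Ic {m n : ℕ} (A B : Matrix (Fin m) (Fin n) ℝ) : Matrix (Fin m) (Fin n) ℝ :=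
  fun i j => (A i j + B i j) / 2

noncomputable def Dlt {m n : ℕ} (A B : Matrix (Fin m) (Fin n) ℝ) : Matrix (Fin m) (Fin n) ℝ :=
  fun i j => (Iu A B i j - Il A B i j) / 2

noncomputable def Iz {n : ℕ} (A B : Matrix (Fin n) (Fin n) ℝ) (z : Fin n → ℝ) :
    Matrix (Fin n) (Fin n) ℝ :=
  Ic A B - Matrix.diagonal z * Dlt A B * Matrix.diagonal z

def SignVec {n : ℕ} (z : Fin n → ℝ) : Prop := ∀ i, z i = 1 ∨ z i = -1

def BlockPattern {n : ℕ} (A : Matrix (Fin n) (Fin n) ℝ) (J : Finset (Fin n)) : Prop :=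
  (∀ i ∈ J, ∀ j ∈ J, A i j < 0) ∧ (∀ i ∉ J, ∀ j ∉ J, A i j < 0) ∧
  (∀ i ∈ J, ∀ j ∉ J, 0 < A i j) ∧ (∀ i ∉ J, ∀ j ∈ J, 0 < A i j)

def IsNMatrixSecond {n : ℕ} (A : Matrix (Fin n) (Fin n) ℝ) : Prop :=
  IsNMatrix A ∧ ∀ i j, A i j ≤ 0

def IsNMatrixFirst {n : ℕ} (A : Matrix (Fin n) (Fin n) ℝ) (J : Finset (Fin n)) : Prop :=
  IsNMatrix A ∧ BlockPattern A J

def IsAlmostPSecond {n : ℕ} (A : Matrix (Fin n) (Fin n) ℝ) : Prop :=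
  IsUnit A.det ∧ IsNMatrix A⁻¹ ∧ ∀ i j, A⁻¹ i j < 0

def IsAlmostPFirst {n : ℕ} (A : Matrix (Fin n) (Fin n) ℝ) (J : Finset (Fin n)) : Prop :=
  IsUnit A.det ∧ IsNMatrixFirst A⁻¹ J

def InJ {n : ℕ} (J : Finset (Fin n)) (x : Fin n → ℝ) : Prop :=
  (∀ j ∈ J, 0 < x j) ∧ (∀ j ∉ J, x j < 0)

def Semipos {p q : Type*} [Fintype q] (M : Matrix p q ℝ) : Prop :=
  ∃ x : q → ℝ, (∀ j, 0 ≤ x j) ∧ ∀ i, 0 < M.mulVec x i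

def MinSemipos {m n : ℕ} (M : Matrix (Fin m) (Fin n) ℝ) : Prop :=
  Semipos M ∧
  ∀ j₀ : Fin n, ¬ Semipos (M.submatrix id (fun j : {j : Fin n // j ≠ j₀} => (j : Fin n)))


set_option linter.unusedSectionVars false
set_option maxHeartbeats 1000000
section Generic


variable {m : Type*} [Fintype m] [DecidableEq m]

lemma entry_nonneg_mul {P Q : Matrix m m ℝ} (hP : ∀ i j, 0 ≤ P i j)
    (hQ : ∀ i j, 0 ≤ Q i j) : ∀ i j, 0 ≤ (P * Q) i j := by
  intro i j
  rw [Matrix.mul_apply]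
  exact Finset.sum_nonneg fun k _ => mul_nonneg (hP i k) (hQ k j)

lemma mulVec_mono {P : Matrix m m ℝ} (hP : ∀ i j, 0 ≤ P i j) {x y : m → ℝ}
    (h : ∀ i, x i ≤ y i) : ∀ i, (P *ᵥ x) i ≤ (P *ᵥ y) i := by
  intro i
  exact Finset.sum_le_sum fun k _ => mul_le_mul_of_nonneg_left (h k) (hP i k)

lemma mulVec_nonneg {P : Matrix m m ℝ} (hP : ∀ i j, 0 ≤ P i j) {x : m → ℝ}
    (h : ∀ i, 0 ≤ x i) : ∀ i, 0 ≤ (P *ᵥ x) i := by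
  intro i
  exact Finset.sum_nonneg fun k _ => mul_nonneg (hP i k) (h k)

lemma mulVec_nonpos {P : Matrix m m ℝ} (hP : ∀ i j, 0 ≤ P i j) {x : m → ℝ}
    (h : ∀ i, x i ≤ 0) : ∀ i, (P *ᵥ x) i ≤ 0 := by
  intro i
  exact Finset.sum_nonpos fun k _ => mul_nonpos_of_nonneg_of_nonpos (hP i k) (h k)

lemma kuttler (A B M : Matrix m m ℝ)
    (hAM : ∀ i j, A i j ≤ M i j) (hMB : ∀ i j, M i j ≤ B i j)
    (hA : IsUnit A.det) (hB : IsUnit B.det)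
    (hAi : ∀ i j, 0 ≤ A⁻¹ i j) (hBi : ∀ i j, 0 ≤ B⁻¹ i j) :
    IsUnit M.det ∧ ∀ i j, B⁻¹ i j ≤ M⁻¹ i j := by
  have hS : ∀ i j, 0 ≤ (B⁻¹ * (B - A)) i j :=
    entry_nonneg_mul hBi (fun i j => by
      have h1 := hAM i j; have h2 := hMB i j
      simp only [Matrix.sub_apply]; linarith)
  have hN : B⁻¹ * A = 1 - B⁻¹ * (B - A) := by
    rw [Matrix.mul_sub, Matrix.nonsing_inv_mul B hB]; simp
  have hRent : ∀ i j, 0 ≤ (A⁻¹ * B) i j := by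
    have h1 : A⁻¹ * B = 1 + A⁻¹ * (B - A) := by
      rw [Matrix.mul_sub, Matrix.nonsing_inv_mul A hA]; simp
    intro i j
    have hba : ∀ i j, 0 ≤ (B - A) i j := by
      intro i j; have h1 := hAM i j; have h2 := hMB i j
      simp only [Matrix.sub_apply]; linarith
    have h2 := entry_nonneg_mul hAi hba i j
    rw [h1, Matrix.add_apply]
    by_cases hij : i = j
    · subst hij; simp [Matrix.one_apply]; linarith
    · simp [Matrix.one_apply, hij]; linarith
  have hNR : (A⁻¹ * B) * (B⁻¹ * A) = 1 := by
    rw [Matrix.mul_assoc, ← Matrix.mul_assoc B, Matrix.mul_nonsing_inv B hB,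
      Matrix.one_mul, Matrix.nonsing_inv_mul A hA]
  have key : ∀ x : m → ℝ, (∀ i, 0 ≤ (M *ᵥ x) i) → ∀ i, 0 ≤ x i := by
    intro x hx
    set u : m → ℝ := fun i => max (-x i) 0 with hu
    set v : m → ℝ := fun i => max (x i) 0 with hv
    have hu0 : ∀ i, 0 ≤ u i := fun i => le_max_right _ _
    have hv0 : ∀ i, 0 ≤ v i := fun i => le_max_right _ _
    have hxuv : ∀ i, x i = v i - u i := by
      intro i; simp [hu, hv, max_zero_sub_max_neg_zero_eq_self]
    have step1 : ∀ i, (A *ᵥ u) i ≤ (B *ᵥ v) i := by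
      intro i
      have h1 : (A *ᵥ u) i ≤ (M *ᵥ u) i :=
        Finset.sum_le_sum fun k _ => mul_le_mul_of_nonneg_right (hAM i k) (hu0 k)
      have h2 : (M *ᵥ u) i ≤ (M *ᵥ v) i := by
        have hsub : M *ᵥ (v - u) = M *ᵥ v - M *ᵥ u := Matrix.mulVec_sub M v u
        have hvux : v - u = x := by funext i; simp [(hxuv i).symm]
        have := hx i
        rw [hvux] at hsub
        have heq : (M *ᵥ v) i - (M *ᵥ u) i = (M *ᵥ x) i := by
          rw [hsub, Pi.sub_apply]
        linarith [hx i]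
      have h3 : (M *ᵥ v) i ≤ (B *ᵥ v) i :=
        Finset.sum_le_sum fun k _ => mul_le_mul_of_nonneg_right (hMB i k) (hv0 k)
      linarith
    have step2 : ∀ i, ((B⁻¹ * A) *ᵥ u) i ≤ v i := by
      intro i
      have h1 : (B⁻¹ * A) *ᵥ u = B⁻¹ *ᵥ (A *ᵥ u) := (Matrix.mulVec_mulVec u B⁻¹ A).symm
      have h2 : (B⁻¹ *ᵥ (A *ᵥ u)) i ≤ (B⁻¹ *ᵥ (B *ᵥ v)) i := mulVec_mono hBi step1 i
      have h3 : B⁻¹ *ᵥ (B *ᵥ v) = v := by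
        rw [Matrix.mulVec_mulVec, Matrix.nonsing_inv_mul B hB, Matrix.one_mulVec]
      rw [h1]; rw [h3] at h2; exact h2
    have step3 : ∀ i, ((B⁻¹ * A) *ᵥ u) i ≤ 0 := by
      intro i
      rcases le_or_gt 0 (x i) with h | h
      · have hui : u i = 0 := by simp [hu]; linarith
        have : (B⁻¹ * A) *ᵥ u = u - (B⁻¹ * (B - A)) *ᵥ u := by
          rw [hN, Matrix.sub_mulVec, Matrix.one_mulVec]
        rw [this]
        have := mulVec_nonneg hS hu0 i
        simp [hui]; linarith
      · have hvi : v i = 0 := by simp [hv]; linarith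
        have := step2 i
        rw [hvi] at this; exact this
    have step4 : ∀ i, u i ≤ 0 := by
      intro i
      have h1 : (A⁻¹ * B) *ᵥ ((B⁻¹ * A) *ᵥ u) = u := by
        rw [Matrix.mulVec_mulVec, hNR, Matrix.one_mulVec]
      have := mulVec_nonpos hRent step3 i
      rw [h1] at this; exact this
    intro i
    have : u i = 0 := le_antisymm (step4 i) (hu0 i)
    have hx := hxuv i
    rw [this] at hx; rw [hx]; simpa using hv0 i
  have hdet : M.det ≠ 0 := by
    intro hd
    obtain ⟨x, hx0, hxe⟩ := (Matrix.exists_mulVec_eq_zero_iff).mpr hd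
    have h1 : ∀ i, 0 ≤ x i := key x (by rw [hxe]; simp)
    have h2 : ∀ i, 0 ≤ (-x) i := key (-x) (by rw [Matrix.mulVec_neg, hxe]; simp)
    apply hx0
    funext i
    have := h2 i
    simp at this
    exact le_antisymm this (h1 i)
  have hM : IsUnit M.det := isUnit_iff_ne_zero.mpr hdet
  have hMi : ∀ i j, 0 ≤ M⁻¹ i j := by
    intro i j
    have := key (fun k => M⁻¹ k j) (by
      intro i
      have : (M *ᵥ fun k => M⁻¹ k j) i = (M * M⁻¹) i j := by
        simp [Matrix.mulVec, Matrix.mul_apply, dotProduct]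
      rw [this, Matrix.mul_nonsing_inv M hM]
      by_cases hij : i = j <;> simp [Matrix.one_apply, hij]) i
    exact this
  refine ⟨hM, ?_⟩
  have hiden : M⁻¹ = B⁻¹ + M⁻¹ * (B - M) * B⁻¹ := by
    rw [Matrix.mul_sub, Matrix.sub_mul, Matrix.mul_assoc,
      Matrix.mul_nonsing_inv B hB, Matrix.nonsing_inv_mul M hM]
    simp [Matrix.mul_one]
  intro i j
  have hterm : 0 ≤ (M⁻¹ * (B - M) * B⁻¹) i j :=
    entry_nonneg_mul (entry_nonneg_mul hMi
      (fun i j => by have h1 := hMB i j; simp only [Matrix.sub_apply]; linarith)) hBi i j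
  conv_rhs => rw [hiden]
  rw [Matrix.add_apply]
  linarith

/-- Jacobi's identity for principal minors of the inverse. -/
lemma jacobi (M : Matrix m m ℝ) (hM : IsUnit M.det) (s : Finset m) :
    M.det * ((M⁻¹).submatrix (fun i : ↥s => (i : m)) (fun j : ↥s => (j : m))).det
      = (M.submatrix (fun i : {a : m // a ∉ s} => (i : m))
          (fun j : {a : m // a ∉ s} => (j : m))).det := by
  classical
  let e : {a : m // a ∈ s} ⊕ {a : m // a ∉ s} ≃ m := Equiv.sumCompl (· ∈ s)
  let P := M.submatrix e e
  let Q := (M⁻¹).submatrix e e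
  have hPQ : P * Q = 1 := by
    show M.submatrix e e * (M⁻¹).submatrix e e = 1
    rw [Matrix.submatrix_mul_equiv, Matrix.mul_nonsing_inv M hM, Matrix.submatrix_one_equiv]
  -- blocks
  have hP : P = fromBlocks P.toBlocks₁₁ P.toBlocks₁₂ P.toBlocks₂₁ P.toBlocks₂₂ :=
    (Matrix.fromBlocks_toBlocks P).symm
  have hQ : Q = fromBlocks Q.toBlocks₁₁ Q.toBlocks₁₂ Q.toBlocks₂₁ Q.toBlocks₂₂ :=
    (Matrix.fromBlocks_toBlocks Q).symm
  have h1 : P.toBlocks₁₁ * Q.toBlocks₁₁ + P.toBlocks₁₂ * Q.toBlocks₂₁ = 1 := by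
    have h := hPQ
    rw [hP, hQ, Matrix.fromBlocks_multiply] at h
    have := congrArg Matrix.toBlocks₁₁ h
    have ht : Matrix.toBlocks₁₁ (1 : Matrix ({a : m // a ∈ s} ⊕ {a : m // a ∉ s})
        ({a : m // a ∈ s} ⊕ {a : m // a ∉ s}) ℝ) = 1 := by
      ext i j
      simp [Matrix.toBlocks₁₁, Matrix.one_apply, Sum.inl.injEq]
    rw [Matrix.toBlocks_fromBlocks₁₁, ht] at this
    exact this
  have h2 : P.toBlocks₂₁ * Q.toBlocks₁₁ + P.toBlocks₂₂ * Q.toBlocks₂₁ = 0 := by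
    have h := hPQ
    rw [hP, hQ, Matrix.fromBlocks_multiply] at h
    have := congrArg Matrix.toBlocks₂₁ h
    have ht : Matrix.toBlocks₂₁ (1 : Matrix ({a : m // a ∈ s} ⊕ {a : m // a ∉ s})
        ({a : m // a ∈ s} ⊕ {a : m // a ∉ s}) ℝ) = 0 := by
      ext i j
      simp [Matrix.toBlocks₂₁, Matrix.one_apply]
    rw [Matrix.toBlocks_fromBlocks₂₁, ht] at this
    exact this
  have hprod : P * fromBlocks Q.toBlocks₁₁ 0 Q.toBlocks₂₁ 1
      = fromBlocks 1 P.toBlocks₁₂ 0 P.toBlocks₂₂ := by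
    nth_rewrite 1 [hP]
    rw [Matrix.fromBlocks_multiply]
    rw [h1, h2]
    simp
  have hdet := congrArg Matrix.det hprod
  rw [Matrix.det_mul, Matrix.det_fromBlocks_zero₁₂, Matrix.det_fromBlocks_zero₂₁] at hdet
  simp only [Matrix.det_one, one_mul, mul_one] at hdet
  have hPdet : P.det = M.det := Matrix.det_submatrix_equiv_self e M
  have hQ11 : Q.toBlocks₁₁ = (M⁻¹).submatrix (fun i : ↥s => (i : m)) (fun j : ↥s => (j : m)) := by
    ext i j
    simp [Q, Matrix.toBlocks₁₁, e]
  have hP22 : P.toBlocks₂₂ = M.submatrix (fun i : {a : m // a ∉ s} => (i : m))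
      (fun j : {a : m // a ∉ s} => (j : m)) := by
    ext i j
    simp [P, Matrix.toBlocks₂₂, e]
  rw [hPdet, hQ11, hP22] at hdet
  exact hdet

/-- converting a minor over `{a // a ∉ s}` to one over `↥sᶜ`. -/
lemma det_compl_flip (M : Matrix m m ℝ) (s : Finset m) :
    (M.submatrix (fun i : {a : m // a ∉ s} => (i : m)) (fun j : {a : m // a ∉ s} => (j : m))).det
      = (M.submatrix (fun i : ↥sᶜ => (i : m)) (fun j : ↥sᶜ => (j : m))).det := by
  let ψ : ↥sᶜ ≃ {a : m // a ∉ s} := Equiv.subtypeEquivRight (fun a => Finset.mem_compl)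
  have : (M.submatrix (fun i : {a : m // a ∉ s} => (i : m))
      (fun j : {a : m // a ∉ s} => (j : m))).submatrix ψ ψ
      = M.submatrix (fun i : ↥sᶜ => (i : m)) (fun j : ↥sᶜ => (j : m)) := by
    ext i j; rfl
  rw [← this, Matrix.det_submatrix_equiv_self]

/-- minor of a minor. -/
lemma det_double (M : Matrix m m ℝ) (T : Finset m) (s : Finset ↥T) :
    (((M.submatrix (fun i : ↥T => (i : m)) (fun j : ↥T => (j : m))).submatrix
        (fun i : ↥s => (i : ↥T)) (fun j : ↥s => (j : ↥T)))).det
      = (M.submatrix (fun i : ↥(s.map (Function.Embedding.subtype _)) => (i : m))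
          (fun j : ↥(s.map (Function.Embedding.subtype _)) => (j : m))).det := by
  classical
  set γ := s.map (Function.Embedding.subtype _) with hγ
  have hf : ∀ i : ↥s, ((i : ↥T) : m) ∈ γ := by
    intro i
    rw [hγ, Finset.mem_map]
    exact ⟨(i : ↥T), i.2, rfl⟩
  let f : ↥s → ↥γ := fun i => ⟨((i : ↥T) : m), hf i⟩
  have hbij : Function.Bijective f := by
    constructor
    · intro i j hij
      have h := congrArg Subtype.val hij
      exact Subtype.ext (Subtype.ext h)
    · intro j
      obtain ⟨a, ha, hae⟩ := Finset.mem_map.mp j.2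
      exact ⟨⟨a, ha⟩, Subtype.ext hae⟩
  let φ : ↥s ≃ ↥γ := Equiv.ofBijective f hbij
  have hsub : (M.submatrix (fun i : ↥γ => (i : m)) (fun j : ↥γ => (j : m))).submatrix φ φ
      = (M.submatrix (fun i : ↥T => (i : m)) (fun j : ↥T => (j : m))).submatrix
        (fun i : ↥s => (i : ↥T)) (fun j : ↥s => (j : ↥T)) := by
    ext i j; rfl
  rw [← hsub, Matrix.det_submatrix_equiv_self]

variable {m : Type*} [Fintype m] [DecidableEq m]

lemma det_piecewise_single (M : Matrix m m ℝ) (s : Finset m) :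
    Matrix.det (Matrix.of (s.piecewise (fun i => M i) (fun i => Pi.single i (1:ℝ))))
      = (M.submatrix (fun i : ↥s => (i : m)) (fun j : ↥s => (j : m))).det := by
  classical
  let e : {a : m // a ∈ s} ⊕ {a : m // a ∉ s} ≃ m := Equiv.sumCompl (· ∈ s)
  let N := Matrix.of (s.piecewise (fun i => M i) (fun i => Pi.single i (1:ℝ)))
  have hN : N.submatrix e e = fromBlocks
      (M.submatrix (fun i : ↥s => (i : m)) (fun j : ↥s => (j : m)))
      (M.submatrix (fun i : ↥s => (i : m)) (fun j : {a : m // a ∉ s} => (j : m)))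
      0 1 := by
    ext i j
    cases i with
    | inl i =>
      cases j with
      | inl j =>
        simp [N, e, Matrix.submatrix_apply, Finset.piecewise_eq_of_mem _ _ _ i.2, fromBlocks]
      | inr j =>
        simp [N, e, Matrix.submatrix_apply, Finset.piecewise_eq_of_mem _ _ _ i.2, fromBlocks]
    | inr i =>
      cases j with
      | inl j =>
        have hne : (j : m) ≠ (i : m) := fun h => i.2 (h ▸ j.2)
        simp [N, e, Matrix.submatrix_apply, Finset.piecewise_eq_of_notMem _ _ _ i.2,
          fromBlocks, Pi.single_apply, hne]
      | inr j =>
        simp [N, e, Matrix.submatrix_apply, Finset.piecewise_eq_of_notMem _ _ _ i.2,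
          fromBlocks, Pi.single_apply, Matrix.one_apply, Subtype.ext_iff, eq_comm]
  have h1 : N.det = (N.submatrix e e).det := (Matrix.det_submatrix_equiv_self e N).symm
  rw [h1, hN, Matrix.det_fromBlocks_zero₂₁, Matrix.det_one, mul_one]

lemma det_add_diagonal (M : Matrix m m ℝ) (d : m → ℝ) :
    (M + Matrix.diagonal d).det
      = ∑ s : Finset m, (∏ i ∈ sᶜ, d i) *
        (M.submatrix (fun i : ↥s => (i : m)) (fun j : ↥s => (j : m))).det := by
  classical
  have h0 : (M + Matrix.diagonal d).det
      = Matrix.detRowAlternating (fun i => M i + Matrix.diagonal d i) := rfl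
  rw [h0]
  have hadd := (Matrix.detRowAlternating (R := ℝ) (n := m)).toMultilinearMap.map_add_univ
    (fun i => M i) (fun i => Matrix.diagonal d i)
  have h1 : (fun i => M i + Matrix.diagonal d i)
      = (fun i => M i) + (fun i => Matrix.diagonal d i) := rfl
  rw [h1]
  erw [hadd]
  apply Finset.sum_congr rfl
  intro s _
  have hpw : s.piecewise (fun i => M i) (fun i => Matrix.diagonal d i)
      = fun i => (if i ∈ s then (1:ℝ) else d i) •
          (s.piecewise (fun i => M i) (fun i => Pi.single i (1:ℝ))) i := by
    funext i
    by_cases hi : i ∈ s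
    · simp [Finset.piecewise_eq_of_mem _ _ _ hi, hi]
    · simp only [Finset.piecewise_eq_of_notMem _ _ _ hi, hi, if_false]
      funext j
      by_cases hij : i = j <;> simp [Matrix.diagonal_apply, Pi.single_apply, hij, eq_comm]
  rw [hpw]
  rw [MultilinearMap.map_smul_univ]
  have hprod : (∏ i, (if i ∈ s then (1:ℝ) else d i)) = ∏ i ∈ sᶜ, d i := by
    rw [← Finset.prod_mul_prod_compl s]
    have : ∀ i ∈ s, (if i ∈ s then (1:ℝ) else d i) = 1 := fun i hi => by simp [hi]
    rw [Finset.prod_congr rfl this, Finset.prod_const_one, one_mul]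
    apply Finset.prod_congr rfl
    intro i hi
    simp [Finset.mem_compl.mp hi]
  rw [hprod]
  have := det_piecewise_single M s
  rw [← this]
  rfl
lemma charpoly_eval (N : Matrix m m ℝ) (t : ℝ) :
    (N.charpoly).eval t = (t • (1 : Matrix m m ℝ) - N).det := by
  classical
  rw [Matrix.charpoly, ← Polynomial.coe_evalRingHom, RingHom.map_det]
  congr 1
  ext i j
  by_cases hij : i = j
  · subst hij
    simp [Matrix.charmatrix_apply_eq, Matrix.one_apply]
  · simp [Matrix.charmatrix_apply_ne _ _ _ hij, Matrix.one_apply, hij]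

lemma fp1 [Nonempty m] (M : Matrix m m ℝ) (h : M.det ≤ 0) :
    ∃ x : m → ℝ, x ≠ 0 ∧ ∀ i, x i * (M *ᵥ x) i ≤ 0 := by
  classical
  set p := (-M).charpoly with hp
  have heval : ∀ t : ℝ, p.eval t = (t • (1 : Matrix m m ℝ) + M).det := by
    intro t
    rw [hp, charpoly_eval, sub_neg_eq_add]
  have h0 : p.eval 0 ≤ 0 := by
    rw [heval]; simpa using h
  have hmonic : p.Monic := Matrix.charpoly_monic _
  have hdeg : 0 < p.degree := by
    have hnd : p.natDegree = Fintype.card m := Matrix.charpoly_natDegree_eq_dim _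
    rw [← Polynomial.natDegree_pos_iff_degree_pos, hnd]
    exact Fintype.card_pos
  have htend := p.tendsto_atTop_of_leadingCoeff_nonneg hdeg (by rw [hmonic.leadingCoeff]; norm_num)
  obtain ⟨t1, ht1⟩ := ((htend.eventually_ge_atTop 1).and (Filter.eventually_ge_atTop 0)).exists
  obtain ⟨hpt1, ht10⟩ := ht1
  have hcont : ContinuousOn (fun t => p.eval t) (Set.Icc 0 t1) :=
    (Polynomial.continuous p).continuousOn
  have hmem : (0:ℝ) ∈ Set.Icc (p.eval 0) (p.eval t1) := ⟨h0, by linarith⟩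
  obtain ⟨t0, ht0mem, ht0⟩ := intermediate_value_Icc ht10 hcont hmem
  have hdet0 : (t0 • (1 : Matrix m m ℝ) + M).det = 0 := by rw [← heval]; exact ht0
  obtain ⟨x, hx0, hxe⟩ := (Matrix.exists_mulVec_eq_zero_iff).mpr hdet0
  refine ⟨x, hx0, ?_⟩
  intro i
  have : (M *ᵥ x) i = - (t0 * x i) := by
    have h1 : ((t0 • (1 : Matrix m m ℝ) + M) *ᵥ x) i = 0 := by rw [hxe]; rfl
    rw [Matrix.add_mulVec, Matrix.smul_mulVec, Matrix.one_mulVec] at h1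
    simp only [Pi.add_apply, Pi.smul_apply, smul_eq_mul] at h1
    linarith
  rw [this]
  have ht0nn : 0 ≤ t0 := ht0mem.1
  nlinarith [sq_nonneg (x i)]

lemma fp3 (M : Matrix m m ℝ)
    (h : ∀ s : Finset m, 0 < (M.submatrix (fun i : ↥s => (i : m)) (fun j : ↥s => (j : m))).det)
    (x : m → ℝ) (hx : x ≠ 0) : ∃ i, 0 < x i * (M *ᵥ x) i := by
  classical
  by_contra hcon
  push_neg at hcon
  set T : Finset m := Finset.univ.filter (fun i => x i ≠ 0) with hT
  have hTne : T.Nonempty := by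
    obtain ⟨i, hi⟩ := Function.ne_iff.mp hx
    refine ⟨i, ?_⟩
    simp only [hT, Finset.mem_filter, Finset.mem_univ, true_and]
    simpa using hi
  set M' : Matrix ↥T ↥T ℝ := M.submatrix (fun i : ↥T => (i : m)) (fun j : ↥T => (j : m)) with hM'
  set d : ↥T → ℝ := fun i => -((M *ᵥ x) (i : m)) / x (i : m) with hd
  have hxne : ∀ i : ↥T, x (i : m) ≠ 0 := fun i => (Finset.mem_filter.mp i.2).2
  have hd0 : ∀ i, 0 ≤ d i := by
    intro i
    rw [hd]
    have h1 := hcon (i : m)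
    have h2 := hxne i
    rw [div_nonneg_iff]
    rcases lt_or_gt_of_ne h2 with h3 | h3
    · right
      constructor
      · nlinarith
      · exact le_of_lt h3
    · left
      constructor
      · nlinarith
      · exact le_of_lt h3
  set x' : ↥T → ℝ := fun i => x (i : m) with hx'
  have hsum : ∀ i : ↥T, (M' *ᵥ x') i = (M *ᵥ x) (i : m) := by
    intro i
    have h1 : (M' *ᵥ x') i = ∑ j : ↥T, M (i : m) (j : m) * x (j : m) := rfl
    have h2 : (M *ᵥ x) (i : m) = ∑ j, M (i : m) j * x j := rfl
    rw [h1, h2, Finset.univ_eq_attach, Finset.sum_attach T (fun j => M (i : m) j * x j)]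
    apply Finset.sum_subset (Finset.subset_univ T)
    intro j _ hj
    have hxj : x j = 0 := by
      by_contra hne
      exact hj (by simp [hT, hne])
    simp [hxj]
  have heq : (M' + Matrix.diagonal d) *ᵥ x' = 0 := by
    funext i
    rw [Matrix.add_mulVec]
    simp only [Pi.add_apply, Pi.zero_apply]
    rw [hsum i, Matrix.mulVec_diagonal]
    have hcancel : d i * x' i = -((M *ᵥ x) (i : m)) := by
      rw [hd, hx']
      exact div_mul_cancel₀ _ (hxne i)
    rw [hcancel]
    ring
  have hx'0 : x' ≠ 0 := by
    obtain ⟨i, hi⟩ := hTne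
    intro hzero
    have : x' ⟨i, hi⟩ = 0 := by rw [hzero]; rfl
    exact (Finset.mem_filter.mp hi).2 (by rw [hx'] at this; exact this)
  have hdet : (M' + Matrix.diagonal d).det = 0 :=
    Matrix.exists_mulVec_eq_zero_iff.mp ⟨x', hx'0, heq⟩
  have hterm : ∀ s : Finset ↥T,
      0 < ((M'.submatrix (fun i : ↥s => (i : ↥T)) (fun j : ↥s => (j : ↥T)))).det := by
    intro s
    rw [hM', det_double]
    exact h _
  have hpos : 0 < (M' + Matrix.diagonal d).det := by
    rw [det_add_diagonal]
    apply Finset.sum_pos'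
    · intro s _
      exact mul_nonneg (Finset.prod_nonneg fun i _ => hd0 i) (hterm s).le
    · refine ⟨Finset.univ, Finset.mem_univ _, ?_⟩
      have hcompl : (Finset.univ : Finset ↥T)ᶜ = ∅ := by simp
      rw [hcompl, Finset.prod_empty, one_mul]
      exact hterm _
  exact absurd hdet (ne_of_gt hpos)

end Generic

section Specific

lemma det_subtype_congr {m : Type*} [Fintype m] [DecidableEq m] (M : Matrix m m ℝ)
    {p q : m → Prop} [DecidablePred p] [DecidablePred q] (h : ∀ a, p a ↔ q a) :
    (M.submatrix (fun i : {a // p a} => (i : m)) (fun j : {a // p a} => (j : m))).det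
      = (M.submatrix (fun i : {a // q a} => (i : m)) (fun j : {a // q a} => (j : m))).det := by
  let ψ : {a // q a} ≃ {a // p a} := Equiv.subtypeEquivRight (fun a => (h a).symm)
  have hh : (M.submatrix (fun i : {a // p a} => (i : m))
      (fun j : {a // p a} => (j : m))).submatrix ψ ψ
      = M.submatrix (fun i : {a // q a} => (i : m)) (fun j : {a // q a} => (j : m)) := by
    ext i j; rfl
  rw [← hh, Matrix.det_submatrix_equiv_self]


lemma jacobi' {m : Type*} [Fintype m] [DecidableEq m] (M : Matrix m m ℝ)
    (hM : IsUnit M.det) (s : Finset m) :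
    M.det * ((M⁻¹).submatrix (fun i : ↥s => (i : m)) (fun j : ↥s => (j : m))).det
      = (M.submatrix (fun i : ↥sᶜ => (i : m)) (fun j : ↥sᶜ => (j : m))).det := by
  rw [jacobi M hM s]
  let ψ : ↥sᶜ ≃ {a : m // a ∉ s} := Equiv.subtypeEquivRight (fun a => Finset.mem_compl)
  have hh : (M.submatrix (fun i : {a : m // a ∉ s} => (i : m))
      (fun j : {a : m // a ∉ s} => (j : m))).submatrix ψ ψ
      = M.submatrix (fun i : ↥sᶜ => (i : m)) (fun j : ↥sᶜ => (j : m)) := by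
    ext i j; rfl
  rw [← hh, Matrix.det_submatrix_equiv_self]

lemma jacobi2 {m : Type*} [Fintype m] [DecidableEq m] (M : Matrix m m ℝ)
    (hM : IsUnit M.det) (s : Finset m) :
    M.det * ((M⁻¹).submatrix (fun i : ↥sᶜ => (i : m)) (fun j : ↥sᶜ => (j : m))).det
      = (M.submatrix (fun i : ↥s => (i : m)) (fun j : ↥s => (j : m))).det := by
  rw [jacobi M hM sᶜ]
  let ψ : ↥s ≃ {a : m // a ∉ sᶜ} :=
    Equiv.subtypeEquivRight (fun a => by simp [Finset.mem_compl])
  have hh : (M.submatrix (fun i : {a : m // a ∉ sᶜ} => (i : m))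
      (fun j : {a : m // a ∉ sᶜ} => (j : m))).submatrix ψ ψ
      = M.submatrix (fun i : ↥s => (i : m)) (fun j : ↥s => (j : m)) := by
    ext i j; rfl
  rw [← hh, Matrix.det_submatrix_equiv_self]

lemma det_univ_subtype {m : Type*} [Fintype m] [DecidableEq m] (M : Matrix m m ℝ) :
    (M.submatrix (fun i : ↥(Finset.univ : Finset m) => (i : m))
      (fun j : ↥(Finset.univ : Finset m) => (j : m))).det = M.det := by
  let e : ↥(Finset.univ : Finset m) ≃ m := Equiv.subtypeUnivEquiv (fun x => Finset.mem_univ x)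
  have hh : M.submatrix (fun i : ↥(Finset.univ : Finset m) => (i : m))
      (fun j : ↥(Finset.univ : Finset m) => (j : m)) = M.submatrix e e := rfl
  rw [hh, Matrix.det_submatrix_equiv_self]

variable {n : ℕ} (A B : Matrix (Fin n) (Fin n) ℝ)

lemma Ic_sub_Dlt (i j : Fin n) : Ic A B i j - Dlt A B i j = Il A B i j := by
  unfold Ic Dlt Iu Il
  rcases le_total (A i j) (B i j) with h | h
  · rw [max_eq_right h, min_eq_left h]; ring
  · rw [max_eq_left h, min_eq_right h]; ring

lemma Ic_add_Dlt (i j : Fin n) : Ic A B i j + Dlt A B i j = Iu A B i j := by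
  unfold Ic Dlt Iu Il
  rcases le_total (A i j) (B i j) with h | h
  · rw [max_eq_right h, min_eq_left h]; ring
  · rw [max_eq_left h, min_eq_right h]; ring

lemma Dlt_nonneg (i j : Fin n) : 0 ≤ Dlt A B i j := by
  unfold Dlt
  have := min_le_max (a := A i j) (b := B i j)
  unfold Iu Il
  linarith

lemma Iz_apply (z : Fin n → ℝ) (i j : Fin n) :
    Iz A B z i j = Ic A B i j - z i * Dlt A B i j * z j := by
  unfold Iz
  rw [Matrix.sub_apply, Matrix.mul_diagonal, Matrix.diagonal_mul]

lemma Iz_one : Iz A B (fun _ => (1:ℝ)) = Il A B := by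
  ext i j
  rw [Iz_apply]
  have := Ic_sub_Dlt A B i j
  simp only [one_mul, mul_one]
  linarith

lemma hull_iff (C : Matrix (Fin n) (Fin n) ℝ) :
    C ∈ IntervalHull A B ↔ ∀ i j, Il A B i j ≤ C i j ∧ C i j ≤ Iu A B i j := by
  constructor
  · intro h i j
    obtain ⟨t, ⟨ht0, ht1⟩, hc⟩ := h i j
    rw [hc]
    unfold Il Iu
    constructor
    · rcases le_total (A i j) (B i j) with h' | h'
      · rw [min_eq_left h']; nlinarith
      · rw [min_eq_right h']; nlinarith
    · rcases le_total (A i j) (B i j) with h' | h'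
      · rw [max_eq_right h']; nlinarith
      · rw [max_eq_left h']; nlinarith
  · intro h i j
    obtain ⟨h1, h2⟩ := h i j
    by_cases hab : A i j = B i j
    · refine ⟨0, ⟨le_refl 0, by norm_num⟩, ?_⟩
      have hl : Il A B i j = B i j := by unfold Il; rw [hab, min_self]
      have hu : Iu A B i j = B i j := by unfold Iu; rw [hab, max_self]
      rw [hl] at h1; rw [hu] at h2
      have : C i j = B i j := le_antisymm h2 h1
      rw [this]; ring
    · have hne : A i j - B i j ≠ 0 := sub_ne_zero.mpr hab
      refine ⟨(C i j - B i j) / (A i j - B i j), ⟨?_, ?_⟩, ?_⟩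
      · rw [div_nonneg_iff]
        rcases lt_or_gt_of_ne hab with h' | h'
        · right
          have hIu : Iu A B i j = B i j := by unfold Iu; exact max_eq_right h'.le
          exact ⟨by rw [hIu] at h2; linarith, by linarith⟩
        · left
          have hIl : Il A B i j = B i j := by unfold Il; exact min_eq_right h'.le
          exact ⟨by rw [hIl] at h1; linarith, by linarith⟩
      · rw [div_le_one_iff]
        rcases lt_or_gt_of_ne hab with h' | h'
        · right; right
          have hIl : Il A B i j = A i j := by unfold Il; exact min_eq_left h'.le
          exact ⟨by linarith, by rw [hIl] at h1; linarith⟩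
        · left
          have hIu : Iu A B i j = A i j := by unfold Iu; exact max_eq_left h'.le
          exact ⟨by linarith, by rw [hIu] at h2; linarith⟩
      · field_simp
        ring
  
end Specific

section Specific2
variable {n : ℕ}

lemma det_neg_of_almostPSecond [Nonempty (Fin n)] {M : Matrix (Fin n) (Fin n) ℝ}
    (h : IsAlmostPSecond M) : M.det < 0 := by
  obtain ⟨hunit, hN, hneg⟩ := h
  have huniv := hN Finset.univ Finset.univ_nonempty
  rw [det_univ_subtype] at huniv
  rw [Matrix.det_nonsing_inv, Ring.inverse_eq_inv'] at huniv
  exact inv_lt_zero.mp huniv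

lemma minors_pos {M : Matrix (Fin n) (Fin n) ℝ} (h : IsAlmostPSecond M)
    (s : Finset (Fin n)) (hs : s ≠ Finset.univ) :
    0 < (M.submatrix (fun i : ↥s => (i : Fin n)) (fun j : ↥s => (j : Fin n))).det := by
  haveI : Nonempty (Fin n) := by
    rcases Nat.eq_zero_or_pos n with h0 | h0
    · exfalso; apply hs; subst h0
      apply Finset.eq_univ_of_forall; intro i; exact i.elim0
    · exact ⟨⟨0, h0⟩⟩
  have hdetM : M.det < 0 := det_neg_of_almostPSecond h
  rcases Finset.eq_empty_or_nonempty s with hse | hsne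
  · subst hse
    haveI : IsEmpty (↥(∅ : Finset (Fin n))) := ⟨fun i => (Finset.notMem_empty _ i.2)⟩
    rw [Matrix.det_isEmpty]; norm_num
  · have hj := jacobi2 M h.1 s
    have hcomplne : (sᶜ : Finset (Fin n)).Nonempty :=
      (Finset.compl_ne_univ_iff_nonempty sᶜ).mp (by rwa [compl_compl])
    have hNc := h.2.1 sᶜ hcomplne
    have hpos := mul_pos_of_neg_of_neg hdetM hNc
    rw [hj] at hpos
    exact hpos

lemma center_bound (A B C : Matrix (Fin n) (Fin n) ℝ)
    (hC : ∀ i j, Il A B i j ≤ C i j ∧ C i j ≤ Iu A B i j) (i j : Fin n) :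
    |C i j - Ic A B i j| ≤ Dlt A B i j := by
  have h1 := (hC i j).1
  have h2 := (hC i j).2
  have hl := Ic_sub_Dlt A B i j
  have hu := Ic_add_Dlt A B i j
  rw [abs_le]
  constructor <;> linarith

lemma pm (A B : Matrix (Fin n) (Fin n) ℝ)
    (hz : ∀ z : Fin n → ℝ, SignVec z → IsAlmostPSecond (Iz A B z))
    (C : Matrix (Fin n) (Fin n) ℝ)
    (hC : ∀ i j, Il A B i j ≤ C i j ∧ C i j ≤ Iu A B i j)
    (s : Finset (Fin n)) (hne : s.Nonempty) (hproper : s ≠ Finset.univ) :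
    0 < (C.submatrix (fun i : ↥s => (i : Fin n)) (fun j : ↥s => (j : Fin n))).det := by
  by_contra hcon
  push_neg at hcon
  haveI : Nonempty ↥s := Finset.nonempty_coe_sort.mpr hne
  obtain ⟨x, hx0, hxrev⟩ := fp1 _ hcon
  classical
  set z : Fin n → ℝ := fun i => if h : i ∈ s then (if 0 ≤ x ⟨i, h⟩ then 1 else -1) else 1
    with hzdef
  have hsv : SignVec z := by
    intro i
    rw [hzdef]
    by_cases h : i ∈ s
    · simp only [dif_pos h]
      split_ifs <;> simp
    · simp [h]
  have hzx : ∀ i : ↥s, z (i : Fin n) * x i = |x i| := by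
    intro i
    rw [hzdef]
    simp only [dif_pos i.2]
    split_ifs with h
    · rw [one_mul, abs_of_nonneg h]
    · rw [neg_one_mul, abs_of_neg (lt_of_not_ge h)]
  set Mz : Matrix ↥s ↥s ℝ :=
    (Iz A B z).submatrix (fun i : ↥s => (i : Fin n)) (fun j : ↥s => (j : Fin n)) with hMz
  have hrev2 : ∀ i, x i * (Mz *ᵥ x) i ≤ 0 := by
    intro i
    have hle : x i * (Mz *ᵥ x) i
        ≤ x i * ((C.submatrix (fun i : ↥s => (i : Fin n)) (fun j : ↥s => (j : Fin n))) *ᵥ x) i := by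
      have e1 : x i * (Mz *ᵥ x) i = ∑ j : ↥s, x i * (Mz i j * x j) := by
        rw [Matrix.mulVec, dotProduct, Finset.mul_sum]
      have e2 : x i * ((C.submatrix (fun i : ↥s => (i : Fin n)) (fun j : ↥s => (j : Fin n))) *ᵥ x) i
          = ∑ j : ↥s, x i * (C (i : Fin n) (j : Fin n) * x j) := by
        rw [Matrix.mulVec, dotProduct, Finset.mul_sum]
        rfl
      rw [e1, e2]
      apply Finset.sum_le_sum
      intro j _
      have habs : |C (i : Fin n) (j : Fin n) - Ic A B (i : Fin n) (j : Fin n)|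
          ≤ Dlt A B (i : Fin n) (j : Fin n) := center_bound A B C hC _ _
      have hMzij : Mz i j = Ic A B (i : Fin n) (j : Fin n)
          - z (i : Fin n) * Dlt A B (i : Fin n) (j : Fin n) * z (j : Fin n) := by
        rw [hMz, Matrix.submatrix_apply, Iz_apply]
      set a := x i
      set b := x j
      set D := Dlt A B (i : Fin n) (j : Fin n)
      set e := C (i : Fin n) (j : Fin n) - Ic A B (i : Fin n) (j : Fin n) with he
      have hzia := hzx i
      have hzjb := hzx j
      have hkey : a * b * e + |a| * |b| * D ≥ 0 := by
        have h1 : |a * b * e| ≤ |a| * |b| * D := by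
          rw [abs_mul, abs_mul]
          apply mul_le_mul_of_nonneg_left habs (by positivity)
        have h2 := neg_abs_le (a * b * e)
        linarith
      have hexp : a * (C (i : Fin n) (j : Fin n) * b) - a * (Mz i j * b)
          = a * b * e + (z (i : Fin n) * a) * (z (j : Fin n) * b) * D := by
        rw [hMzij, he]; ring
      rw [hzia, hzjb] at hexp
      linarith
    exact le_trans hle (hxrev i)
  have hminor : ∀ β : Finset ↥s,
      0 < ((Mz.submatrix (fun i : ↥β => (i : ↥s)) (fun j : ↥β => (j : ↥s)))).det := by
    intro β
    rw [hMz, det_double]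
    apply minors_pos (hz z hsv)
    intro hun
    apply hproper
    have hsub : (β.map (Function.Embedding.subtype _)) ⊆ s := by
      intro a ha
      obtain ⟨b, _, rfl⟩ := Finset.mem_map.mp ha
      exact b.2
    rw [hun] at hsub
    exact Finset.univ_subset_iff.mp hsub
  obtain ⟨i, hi⟩ := fp3 Mz hminor x hx0
  exact absurd hi (not_lt.mpr (hrev2 i))

end Specific2

theorem stmt13 {n : ℕ} (A B : Matrix (Fin n) (Fin n) ℝ) :
    (∀ C ∈ IntervalHull A B, IsAlmostPSecond C) ↔
      (IsAlmostPSecond (Iu A B) ∧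
        ∀ z : Fin n → ℝ, SignVec z → IsAlmostPSecond (Iz A B z)) := by
  constructor
  · intro H
    constructor
    · refine H _ ?_
      rw [hull_iff]
      intro i j
      exact ⟨min_le_max, le_refl _⟩
    · intro z hzs
      refine H _ ?_
      rw [hull_iff]
      intro i j
      have hD := Dlt_nonneg A B i j
      have hl := Ic_sub_Dlt A B i j
      have hu := Ic_add_Dlt A B i j
      have hmm : Il A B i j ≤ Iu A B i j := min_le_max
      rw [Iz_apply]
      rcases hzs i with hi | hi <;> rcases hzs j with hj | hj <;> rw [hi, hj] <;>
        constructor <;> ring_nf <;> linarith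
  · rintro ⟨hu, hz⟩ C hCmem
    rw [hull_iff] at hCmem
    rcases Nat.eq_zero_or_pos n with hn | hn
    · subst hn
      refine ⟨by rw [Matrix.det_fin_zero]; exact isUnit_one, ?_, ?_⟩
      · intro t ht
        obtain ⟨i, _⟩ := ht
        exact i.elim0
      · intro i; exact i.elim0
    · haveI : Nonempty (Fin n) := ⟨⟨0, hn⟩⟩
      have hIl : IsAlmostPSecond (Il A B) := by
        have := hz (fun _ => 1) (fun i => Or.inl rfl)
        rwa [Iz_one] at this
      have hIlu : IsUnit (Il A B).det := hIl.1
      have hIuu : IsUnit (Iu A B).det := hu.1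
      have hIlinv : ∀ i j, (Il A B)⁻¹ i j < 0 := hIl.2.2
      have hIuinv : ∀ i j, (Iu A B)⁻¹ i j < 0 := hu.2.2
      have hnegdet : ∀ X : Matrix (Fin n) (Fin n) ℝ, IsUnit X.det → IsUnit (-X).det := by
        intro X hX
        rw [Matrix.det_neg, isUnit_iff_ne_zero]
        exact mul_ne_zero (pow_ne_zero _ (by norm_num)) (isUnit_iff_ne_zero.mp hX)
      have hneginv : ∀ X : Matrix (Fin n) (Fin n) ℝ, IsUnit X.det → (-X)⁻¹ = -X⁻¹ := by
        intro X hX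
        apply Matrix.inv_eq_right_inv
        rw [Matrix.neg_mul, Matrix.mul_neg, neg_neg, Matrix.mul_nonsing_inv X hX]
      have hkut : ∀ X : Matrix (Fin n) (Fin n) ℝ,
          (∀ i j, Il A B i j ≤ X i j ∧ X i j ≤ Iu A B i j) →
          IsUnit X.det ∧ ∀ i j, X⁻¹ i j ≤ (Il A B)⁻¹ i j := by
        intro X hX
        have hk := kuttler (-(Iu A B)) (-(Il A B)) (-X)
          (fun i j => by simp only [Matrix.neg_apply, neg_le_neg_iff]; exact (hX i j).2)
          (fun i j => by simp only [Matrix.neg_apply, neg_le_neg_iff]; exact (hX i j).1)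
          (hnegdet _ hIuu) (hnegdet _ hIlu)
          (by
            intro i j
            rw [hneginv _ hIuu]
            simp only [Matrix.neg_apply]
            linarith [hIuinv i j])
          (by
            intro i j
            rw [hneginv _ hIlu]
            simp only [Matrix.neg_apply]
            linarith [hIlinv i j])
        obtain ⟨hdet, hle⟩ := hk
        have hXunit : IsUnit X.det := by
          rw [Matrix.det_neg, isUnit_iff_ne_zero] at hdet
          rw [isUnit_iff_ne_zero]
          intro h0; apply hdet; rw [h0, mul_zero]
        refine ⟨hXunit, ?_⟩
        intro i j
        have hh := hle i j
        rw [hneginv _ hIlu, hneginv _ hXunit] at hh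
        simp only [Matrix.neg_apply] at hh
        linarith
      obtain ⟨hCunit, hCle⟩ := hkut C hCmem
      have hCinvneg : ∀ i j, C⁻¹ i j < 0 := fun i j => lt_of_le_of_lt (hCle i j) (hIlinv i j)
      have hdetIu : (Iu A B).det < 0 := det_neg_of_almostPSecond hu
      have hdetC : C.det < 0 := by
        rcases lt_trichotomy C.det 0 with h | h | h
        · exact h
        · exact absurd h (isUnit_iff_ne_zero.mp hCunit)
        · exfalso
          set f : ℝ → ℝ := fun t => ((1 - t) • C + t • Iu A B).det with hf
          have hcont : Continuous f := by
            apply Continuous.matrix_det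
            exact ((continuous_const.sub continuous_id).smul continuous_const).add
              (continuous_id.smul continuous_const)
          have hbounds : ∀ t ∈ Set.Icc (0:ℝ) 1, ∀ i j,
              Il A B i j ≤ ((1 - t) • C + t • Iu A B) i j ∧
                ((1 - t) • C + t • Iu A B) i j ≤ Iu A B i j := by
            intro t ht i j
            have h1 := (hCmem i j).1
            have h2 := (hCmem i j).2
            have hminmax : Il A B i j ≤ Iu A B i j := min_le_max
            obtain ⟨ht0, ht1⟩ := ht
            simp only [Matrix.add_apply, Matrix.smul_apply, smul_eq_mul]
            constructor <;> nlinarith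
          have hne : ∀ t ∈ Set.Icc (0:ℝ) 1, f t ≠ 0 := by
            intro t ht
            exact isUnit_iff_ne_zero.mp (hkut _ (hbounds t ht)).1
          have hf0 : f 0 = C.det := by simp [hf]
          have hf1 : f 1 = (Iu A B).det := by simp [hf]
          have hmem : (0:ℝ) ∈ Set.Icc (f 1) (f 0) :=
            ⟨by rw [hf1]; exact hdetIu.le, by rw [hf0]; exact h.le⟩
          obtain ⟨t0, ht0m, ht0⟩ := intermediate_value_Icc' zero_le_one hcont.continuousOn hmem
          exact hne t0 ht0m ht0
      refine ⟨hCunit, ?_, hCinvneg⟩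
      intro t htne
      by_cases htu : t = Finset.univ
      · subst htu
        rw [det_univ_subtype, Matrix.det_nonsing_inv, Ring.inverse_eq_inv']
        exact inv_lt_zero.mpr hdetC
      · have hj := jacobi' C hCunit t
        have hcne : (tᶜ : Finset (Fin n)).Nonempty :=
          (Finset.compl_ne_univ_iff_nonempty tᶜ).mp (by rwa [compl_compl])
        have hcnu : (tᶜ : Finset (Fin n)) ≠ Finset.univ := by
          intro hcu
          obtain ⟨i, hi⟩ := htne
          have hmem : i ∈ tᶜ := hcu ▸ Finset.mem_univ i
          exact (Finset.mem_compl.mp hmem) hi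
        have hpos := pm A B hz C hCmem tᶜ hcne hcnu
        by_contra hX
        push_neg at hX
        nlinarith [hj, hpos, hdetC, hX]
end

section
/- Let J be a nonempty proper subset of {1,…,n} and define 𝕁 = {x ∈ ℝ^n : x_j > 0 for j ∈ J, x_j < 0 for j ∉ J}. If A is an almost P-matrix of the first category with respect to J, then there exists x ∈ 𝕁 with Ax ∈ −𝕁. -/
open Matrix Finset

theorem stmt14 {n : ℕ} (J : Finset (Fin n)) (hJ : J.Nonempty)
    (hJ2 : J ≠ Finset.univ) (A : Matrix (Fin n) (Fin n) ℝ)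
    (hA : IsAlmostPFirst A J) :
    ∃ x : Fin n → ℝ, InJ J x ∧ InJ J (-(A.mulVec x)) := by
  obtain ⟨hdet, hN, hBP⟩ := hA
  obtain ⟨hJJ, hcc, hJc, hcJ⟩ := hBP
  set y : Fin n → ℝ := fun j => if j ∈ J then (-1 : ℝ) else 1 with hy
  refine ⟨A⁻¹.mulVec y, ?_, ?_⟩
  · have hne : (Finset.univ : Finset (Fin n)).Nonempty := ⟨hJ.choose, Finset.mem_univ _⟩
    constructor
    · intro i hi
      have : 0 < ∑ j, A⁻¹ i j * y j := by
        apply Finset.sum_pos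
        · intro j _
          by_cases hj : j ∈ J
          · simp only [hy, if_pos hj]
            nlinarith [hJJ i hi j hj]
          · simp only [hy, if_neg hj]
            nlinarith [hJc i hi j hj]
        · exact hne
      simpa [Matrix.mulVec, dotProduct] using this
    · intro i hi
      have : ∑ j, A⁻¹ i j * y j < 0 := by
        apply Finset.sum_neg
        · intro j _
          by_cases hj : j ∈ J
          · simp only [hy, if_pos hj]
            nlinarith [hcJ i hi j hj]
          · simp only [hy, if_neg hj]
            nlinarith [hcc i hi j hj]
        · exact hne
      simpa [Matrix.mulVec, dotProduct] using this
  · have hAy : A.mulVec (A⁻¹.mulVec y) = y := by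
      rw [Matrix.mulVec_mulVec, Matrix.mul_nonsing_inv _ hdet, Matrix.one_mulVec]
    rw [hAy]
    constructor
    · intro j hj
      simp [hy, if_pos hj]
    · intro j hj
      simp [hy, if_neg hj]
end

section
/- Let A, B ∈ ℝ^{n×n} and J a nonempty proper subset of {1,…,n}. Define I_J = diag(d) with d_i = 1 for i ∈ J and d_i = −1 for i ∉ J, and I_{P_J} = I_c + I_J Δ I_J, where I_c = (A+B)/2 and Δ = (I_u − I_l)/2. Then every matrix in I(A,B) is an almost P-matrix of the first category with respect to J if and only if I_{P_J} and I_z (for all z ∈ {±1}^n) are almost P-matrices of the first category with respect to J. -/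
open Matrix Finset

section Helpers
variable {ι : Type*} [Fintype ι] [DecidableEq ι]

lemma det_submatrix_comp {R : Type*} [CommRing R] {κ κ' : Type*} [Fintype κ] [DecidableEq κ]
    [Fintype κ'] [DecidableEq κ'] (M : Matrix ι ι R) (f : κ → ι) (e : κ' ≃ κ) :
    (M.submatrix (f ∘ e) (f ∘ e)).det = (M.submatrix f f).det := by
  rw [show M.submatrix (f ∘ e) (f ∘ e) = (M.submatrix f f).submatrix e e from rfl,
    Matrix.det_submatrix_equiv_self]

lemma det_updateRow_single (B : Matrix ι ι ℝ) (i : ι) :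
    (B.updateRow i (Pi.single i 1)).det
      = (B.submatrix (fun j : {j : ι // j ≠ i} => (j : ι))
          (fun j : {j : ι // j ≠ i} => (j : ι))).det := by
  classical
  let e : {j : ι // j ≠ i} ⊕ {j : ι // ¬ j ≠ i} ≃ ι := Equiv.sumCompl _
  haveI : Unique {j : ι // ¬ j ≠ i} := by
    refine ⟨⟨⟨i, by simp⟩⟩, ?_⟩
    rintro ⟨j, hj⟩
    simp only [ne_eq, not_not] at hj
    simp [hj]
  have h1 : ((B.updateRow i (Pi.single i 1)).submatrix e e)
      = Matrix.fromBlocks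
          (B.submatrix (fun j : {j : ι // j ≠ i} => (j : ι)) (fun j : {j : ι // j ≠ i} => (j : ι)))
          (Matrix.of fun (j : {j : ι // j ≠ i}) (k : {j : ι // ¬ j ≠ i}) => B j k)
          0 1 := by
    ext a b
    rcases a with a | a <;> rcases b with b | b
    · simp [e, Matrix.fromBlocks, Matrix.updateRow_apply, a.2]
    · simp [e, Matrix.fromBlocks, Matrix.updateRow_apply, a.2]
    · have ha : (a : ι) = i := not_not.mp a.2
      simp [e, Matrix.fromBlocks, Matrix.updateRow_apply, ha, Pi.single_apply, b.2]
    · have ha : (a : ι) = i := not_not.mp a.2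
      have hb : (b : ι) = i := not_not.mp b.2
      have hab : a = b := Subsingleton.elim a b
      simp [e, Matrix.fromBlocks, Matrix.updateRow_apply, ha, hb, hab, Pi.single_apply,
        Matrix.one_apply]
  have h2 := Matrix.det_submatrix_equiv_self e (B.updateRow i (Pi.single i 1))
  rw [← h2, h1, Matrix.det_fromBlocks_zero₂₁]
  simp

end Helpers

def PMinor {ι : Type} [Fintype ι] [DecidableEq ι] (M : Matrix ι ι ℝ) : Prop :=
  ∀ (κ : Type) [Fintype κ] [DecidableEq κ], ∀ f : κ → ι, Function.Injective f →
    0 < (M.submatrix f f).det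

lemma PMinor.sub {ι κ : Type} [Fintype ι] [DecidableEq ι] [Fintype κ] [DecidableEq κ]
    {M : Matrix ι ι ℝ} (h : PMinor M) (f : κ → ι) (hf : Function.Injective f) :
    PMinor (M.submatrix f f) := by
  intro κ' _ _ g hg
  exact h κ' (f ∘ g) (hf.comp hg)

lemma det_add_diagonal_pos_aux : ∀ (m : ℕ) (ι : Type) [Fintype ι] [DecidableEq ι],
    Fintype.card ι = m → ∀ M : Matrix ι ι ℝ, PMinor M →
    ∀ t : ι → ℝ, (∀ i, 0 ≤ t i) → 0 < (M + Matrix.diagonal t).det := by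
  intro m
  induction m using Nat.strong_induction_on with
  | _ m IH =>
  intro ι _ _ hcard M hM t ht
  suffices H : ∀ (s : Finset ι), ∀ t : ι → ℝ, (∀ i, 0 ≤ t i) → (∀ i ∉ s, t i = 0) →
      0 < (M + Matrix.diagonal t).det by
    exact H Finset.univ t ht (by simp)
  intro s
  induction s using Finset.induction_on with
  | empty =>
    intro t ht h0
    have hteq : t = fun _ => 0 := funext fun i => h0 i (by simp)
    have : M + Matrix.diagonal t = M.submatrix id id := by
      rw [hteq]; simp [Matrix.submatrix_id_id, Matrix.diagonal_zero]
    rw [this]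
    exact hM ι id Function.injective_id
  | @insert i s hi IHs =>
    intro t ht h0
    set t0 := Function.update t i 0 with ht0def
    have ht0n : ∀ j, 0 ≤ t0 j := fun j => by
      by_cases h : j = i <;> simp [t0, Function.update_apply, h, ht j]
    have ht0s : ∀ j, j ∉ s → t0 j = 0 := fun j hj => by
      by_cases h : j = i
      · simp [t0, h]
      · have : j ∉ insert i s := by simp [h, hj]
        simp [t0, Function.update_apply, h, h0 j this]
    set Bm := M + Matrix.diagonal t0 with hBm
    have key : M + Matrix.diagonal t = Bm.updateRow i (Bm i + t i • (Pi.single i 1 : ι → ℝ)) := by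
      ext j k
      by_cases hji : j = i
      · subst hji
        by_cases hjk : j = k
        · subst hjk
          simp [Bm, Matrix.updateRow_apply, Matrix.diagonal_apply_eq, t0]
        · have hkj : ¬ (k = j) := fun h => hjk h.symm
          simp [Bm, Matrix.updateRow_apply, Matrix.diagonal_apply_ne _ hjk, Pi.single_apply, hkj]
      · by_cases hjk : j = k
        · subst hjk
          have : ¬ (j = i) := hji
          simp [Bm, Matrix.updateRow_apply, hji, Matrix.diagonal_apply_eq, t0,
            Function.update_apply, this]
        · simp [Bm, Matrix.updateRow_apply, hji, Matrix.diagonal_apply_ne _ hjk]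
    rw [key, Matrix.det_updateRow_add, Matrix.det_updateRow_smul, Matrix.updateRow_eq_self]
    have h1 : 0 < Bm.det := IHs t0 ht0n ht0s
    have h2 : 0 ≤ t i * (Bm.updateRow i (Pi.single i 1)).det := by
      rcases eq_or_lt_of_le (ht i) with h | h
    
      · rw [← h]; simp
      · refine le_of_lt (mul_pos h ?_)
        rw [det_updateRow_single]
        have hsub : Bm.submatrix (fun j : {j : ι // j ≠ i} => (j : ι))
              (fun j : {j : ι // j ≠ i} => (j : ι))
            = M.submatrix (fun j : {j : ι // j ≠ i} => (j : ι))
                (fun j : {j : ι // j ≠ i} => (j : ι))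
              + Matrix.diagonal (fun j : {j : ι // j ≠ i} => t0 (j : ι)) := by
          ext a b
          by_cases hab : a = b
          · subst hab; simp [Bm, Matrix.diagonal_apply]
          · have hab' : (a : ι) ≠ (b : ι) := fun hc => hab (Subtype.coe_injective hc)
            simp [Bm, Matrix.diagonal_apply, hab, hab']
        rw [hsub]
        have hcard' : Fintype.card {j : ι // j ≠ i} < m := by
          rw [← hcard]; exact Fintype.card_subtype_lt (x := i) (by simp)
        exact IH _ hcard' {j : ι // j ≠ i} rfl _
          (hM.sub (fun j : {j : ι // j ≠ i} => (j : ι)) Subtype.coe_injective) _ (fun j => ht0n j)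
    linarith

lemma pminor_no_reversal {ι : Type} [Fintype ι] [DecidableEq ι] [Nonempty ι]
    (M : Matrix ι ι ℝ) (hM : PMinor M) (x : ι → ℝ) (hx : ∀ i, x i ≠ 0)
    (hrev : ∀ i, x i * M.mulVec x i ≤ 0) : False := by
  classical
  set t : ι → ℝ := fun i => -(M.mulVec x i) / x i with htdef
  have ht : ∀ i, 0 ≤ t i := by
    intro i
    have h := hrev i
    have hx2 : (0:ℝ) < x i ^ 2 := by
      have := hx i
      positivity
    have heq : t i = -(x i * M.mulVec x i) / x i ^ 2 := by
      show -(M.mulVec x i) / x i = _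
      rw [div_eq_div_iff (hx i) (ne_of_gt hx2)]
      ring
    rw [heq]
    apply div_nonneg (by linarith) (le_of_lt hx2)
  have hker : (M + Matrix.diagonal t).mulVec x = 0 := by
    funext i
    have : (M + Matrix.diagonal t).mulVec x i = M.mulVec x i + t i * x i := by
      rw [Matrix.add_mulVec]
      simp [Matrix.mulVec_diagonal]
    rw [this]
    show M.mulVec x i + -(M.mulVec x i) / x i * x i = 0
    rw [div_mul_cancel₀ _ (hx i)]
    ring
  have hdet : (M + Matrix.diagonal t).det = 0 := by
    rw [← Matrix.exists_mulVec_eq_zero_iff]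
    refine ⟨x, ?_, hker⟩
    intro hx0
    exact hx (Classical.arbitrary ι) (congrFun hx0 _)
  have := det_add_diagonal_pos_aux (Fintype.card ι) ι rfl M hM t ht
  rw [hdet] at this
  exact lt_irrefl 0 this

section Kuttler
variable {ι : Type} [Fintype ι] [DecidableEq ι]

lemma mul_entry_nonneg {A B : Matrix ι ι ℝ} (hA : ∀ i j, 0 ≤ A i j) (hB : ∀ i j, 0 ≤ B i j) :
    ∀ i j, 0 ≤ (A * B) i j := fun i j => by
  rw [Matrix.mul_apply]
  exact Finset.sum_nonneg fun k _ => mul_nonneg (hA i k) (hB k j)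

lemma mul_entry_mono {A B C D : Matrix ι ι ℝ} (hA : ∀ i j, 0 ≤ A i j) (hC : ∀ i j, 0 ≤ C i j)
    (hAB : ∀ i j, A i j ≤ B i j) (hCD : ∀ i j, C i j ≤ D i j) :
    ∀ i j, (A * C) i j ≤ (B * D) i j := fun i j => by
  rw [Matrix.mul_apply, Matrix.mul_apply]
  exact Finset.sum_le_sum fun k _ =>
    mul_le_mul (hAB i k) (hCD k j) (hC k j) (le_trans (hA i k) (hAB i k))

lemma pow_entry_nonneg {A : Matrix ι ι ℝ} (hA : ∀ i j, 0 ≤ A i j) (N : ℕ) :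
    ∀ i j, 0 ≤ (A ^ N) i j := by
  induction N with
  | zero => intro i j; simp [Matrix.one_apply]; split <;> norm_num
  | succ N IH =>
    rw [pow_succ]
    exact mul_entry_nonneg IH hA

lemma pow_entry_mono {A B : Matrix ι ι ℝ} (hA : ∀ i j, 0 ≤ A i j)
    (hAB : ∀ i j, A i j ≤ B i j) (N : ℕ) : ∀ i j, (A ^ N) i j ≤ (B ^ N) i j := by
  induction N with
  | zero => intro i j; simp
  | succ N IH =>
    rw [pow_succ, pow_succ]
    exact mul_entry_mono (pow_entry_nonneg hA N) hA IH hAB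

lemma mulVec_mono_vec {A : Matrix ι ι ℝ} (hA : ∀ i j, 0 ≤ A i j) {u v : ι → ℝ}
    (huv : ∀ i, u i ≤ v i) : ∀ i, A.mulVec u i ≤ A.mulVec v i := fun i =>
  Finset.sum_le_sum fun k _ => mul_le_mul_of_nonneg_left (huv k) (hA i k)

lemma mulVec_mono_mat {A B : Matrix ι ι ℝ} (hAB : ∀ i j, A i j ≤ B i j) {v : ι → ℝ}
    (hv : ∀ i, 0 ≤ v i) : ∀ i, A.mulVec v i ≤ B.mulVec v i := fun i =>
  Finset.sum_le_sum fun k _ => mul_le_mul_of_nonneg_right (hAB i k) (hv k)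

lemma kuttler_s16 {A B C : Matrix ι ι ℝ}
    (hAC : ∀ i j, A i j ≤ C i j) (hCB : ∀ i j, C i j ≤ B i j)
    (hA : IsUnit A.det) (hB : IsUnit B.det)
    (hAinv : ∀ i j, 0 ≤ A⁻¹ i j) (hBinv : ∀ i j, 0 ≤ B⁻¹ i j) :
    IsUnit C.det ∧ ∀ i j, B⁻¹ i j ≤ C⁻¹ i j := by
  classical
  set G : Matrix ι ι ℝ := B⁻¹ * (B - C) with hGdef
  set H : Matrix ι ι ℝ := B⁻¹ * (B - A) with hHdef
  set K : Matrix ι ι ℝ := 1 + A⁻¹ * (B - A) with hKdef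
  have hBC0 : ∀ i j, 0 ≤ (B - C) i j := fun i j => by
    simp [Matrix.sub_apply]; linarith [hCB i j]
  have hBA0 : ∀ i j, 0 ≤ (B - A) i j := fun i j => by
    simp [Matrix.sub_apply]; linarith [hAC i j, hCB i j]
  have hG0 : ∀ i j, 0 ≤ G i j := mul_entry_nonneg hBinv hBC0
  have hH0 : ∀ i j, 0 ≤ H i j := mul_entry_nonneg hBinv hBA0
  have hGH : ∀ i j, G i j ≤ H i j := by
    intro i j
    have h := mul_entry_nonneg hBinv (fun i j => by
      simp [Matrix.sub_apply]; linarith [hAC i j] : ∀ i j, 0 ≤ (C - A) i j) i j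
    have : H - G = B⁻¹ * (C - A) := by
      rw [hHdef, hGdef, ← Matrix.mul_sub]
      congr 1
      abel
    have h2 : (H - G) i j = H i j - G i j := rfl
    rw [this] at h2
    linarith [h ,h2.symm.le]
  have hK0 : ∀ i j, 0 ≤ K i j := fun i j => by
    have h1 : (0:ℝ) ≤ (1 : Matrix ι ι ℝ) i j := by
      simp [Matrix.one_apply]; split <;> norm_num
    have h2 := mul_entry_nonneg hAinv hBA0 i j
    simp only [hKdef, Matrix.add_apply]
    linarith
  have h1H : (1 : Matrix ι ι ℝ) - H = B⁻¹ * A := by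
    rw [hHdef, Matrix.mul_sub, Matrix.nonsing_inv_mul B hB]
    abel
  have hKeq : K = A⁻¹ * B := by
    rw [hKdef, Matrix.mul_sub, Matrix.nonsing_inv_mul A hA]
    abel
  have hHK : ((1 : Matrix ι ι ℝ) - H) * K = 1 := by
    rw [h1H, hKeq, Matrix.mul_assoc B⁻¹ A _, ← Matrix.mul_assoc A A⁻¹ B,
      Matrix.mul_nonsing_inv A hA, Matrix.one_mul, Matrix.nonsing_inv_mul B hB]
  -- partial sums of powers of H are bounded by K
  have hSN : ∀ N : ℕ, ∀ i j, (∑ k ∈ Finset.range N, H ^ k) i j ≤ K i j := by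
    intro N i j
    have hgeo : (∑ k ∈ Finset.range N, H ^ k) * ((1 : Matrix ι ι ℝ) - H) = 1 - H ^ N := by
      have := geom_sum_mul H N
      have h2 : (∑ k ∈ Finset.range N, H ^ k) * ((1 : Matrix ι ι ℝ) - H)
          = -((∑ k ∈ Finset.range N, H ^ k) * (H - 1)) := by
        rw [← Matrix.mul_neg]
        congr 1
        abel
      rw [h2, this]
      abel
    have hsum : (∑ k ∈ Finset.range N, H ^ k) = K - H ^ N * K := by
      have := congrArg (· * K) hgeo
      rw [Matrix.mul_assoc, hHK, Matrix.mul_one] at this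
      rw [this, Matrix.sub_mul, Matrix.one_mul]
    rw [hsum]
    have := mul_entry_nonneg (pow_entry_nonneg hH0 N) hK0 i j
    simp only [Matrix.sub_apply]
    linarith
  -- C = B * (1 - G)
  have hCeq : C = B * ((1 : Matrix ι ι ℝ) - G) := by
    have : B * ((1 : Matrix ι ι ℝ) - B⁻¹ * (B - C)) = C := by
      rw [Matrix.mul_sub, Matrix.mul_one, ← Matrix.mul_assoc,
        Matrix.mul_nonsing_inv B hB, Matrix.one_mul]
      abel
    rw [hGdef, this]
  -- 1 - G is nonsingular
  have hdetG : ((1 : Matrix ι ι ℝ) - G).det ≠ 0 := by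
    intro hdet
    obtain ⟨v, hv0, hker⟩ := (Matrix.exists_mulVec_eq_zero_iff).mpr hdet
    have hvG : v = G.mulVec v := by
      have : ((1 : Matrix ι ι ℝ) - G).mulVec v = v - G.mulVec v := by
        rw [Matrix.sub_mulVec, Matrix.one_mulVec]
      rw [this] at hker
      have := sub_eq_zero.mp hker
      exact this
    set a : ι → ℝ := fun i => |v i| with hadef
    have ha0 : ∀ i, 0 ≤ a i := fun i => abs_nonneg _
    have haG : ∀ i, a i ≤ G.mulVec a i := by
      intro i
      have : a i = |G.mulVec v i| := by rw [← hvG]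
      rw [this, Matrix.mulVec, dotProduct]
      refine le_trans (Finset.abs_sum_le_sum_abs _ _) ?_
      show ∑ k, |G i k * v k| ≤ ∑ k, G i k * a k
      refine Finset.sum_le_sum fun k _ => ?_
      rw [abs_mul, abs_of_nonneg (hG0 i k)]
    have haH : ∀ N : ℕ, ∀ i, a i ≤ (H ^ N).mulVec a i := by
      intro N
      induction N with
      | zero => intro i; simp [Matrix.one_mulVec]
      | succ N IH =>
        intro i
        have step1 : a i ≤ H.mulVec a i :=
          le_trans (haG i) (mulVec_mono_mat hGH ha0 i)
        have step2 : H.mulVec a i ≤ H.mulVec ((H ^ N).mulVec a) i :=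
          mulVec_mono_vec hH0 IH i
        have step3 : H.mulVec ((H ^ N).mulVec a) = (H ^ (N + 1)).mulVec a := by
          rw [Matrix.mulVec_mulVec, ← pow_succ']
        rw [step3] at step2
        linarith
    obtain ⟨i0, hi0⟩ : ∃ i, a i > 0 := by
      by_contra hcon
      push_neg at hcon
      apply hv0
      funext i
      have : |v i| = 0 := le_antisymm (hcon i) (ha0 i)
      simpa [abs_eq_zero] using this
    have hbound : ∀ N : ℕ, (N : ℝ) * a i0 ≤ K.mulVec a i0 := by
      intro N
      have h1 : (N : ℝ) * a i0 ≤ ∑ k ∈ Finset.range N, (H ^ k).mulVec a i0 := by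
        calc (N : ℝ) * a i0 = ∑ _k ∈ Finset.range N, a i0 := by
              rw [Finset.sum_const, Finset.card_range, nsmul_eq_mul]
          _ ≤ _ := Finset.sum_le_sum fun k _ => haH k i0
      have h2 : ∑ k ∈ Finset.range N, (H ^ k).mulVec a i0
          = (∑ k ∈ Finset.range N, H ^ k).mulVec a i0 := by
        simp only [Matrix.mulVec, dotProduct, Matrix.sum_apply, Finset.sum_apply,
          Finset.sum_mul]
        rw [Finset.sum_comm]
      have h3 : (∑ k ∈ Finset.range N, H ^ k).mulVec a i0 ≤ K.mulVec a i0 :=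
        mulVec_mono_mat (hSN N) ha0 i0
      rw [h2] at h1
      linarith
    obtain ⟨N, hN⟩ := exists_nat_gt (K.mulVec a i0 / a i0)
    have := hbound N
    rw [div_lt_iff₀ hi0] at hN
    linarith
  have hdetC : IsUnit C.det := by
    rw [hCeq, Matrix.det_mul, isUnit_iff_ne_zero]
    exact mul_ne_zero (isUnit_iff_ne_zero.mp hB) hdetG
  refine ⟨hdetC, ?_⟩
  -- T := (1 - G)⁻¹ is entrywise nonnegative and ≥ 1
  set T : Matrix ι ι ℝ := ((1 : Matrix ι ι ℝ) - G)⁻¹ with hTdef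
  have hTunit : IsUnit ((1 : Matrix ι ι ℝ) - G).det := isUnit_iff_ne_zero.mpr hdetG
  have hT1 : ((1 : Matrix ι ι ℝ) - G) * T = 1 := Matrix.mul_nonsing_inv _ hTunit
  have hT1' : T * ((1 : Matrix ι ι ℝ) - G) = 1 := Matrix.nonsing_inv_mul _ hTunit
  have hTrec : T = 1 + G * T := by
    have h := hT1
    rw [Matrix.sub_mul, Matrix.one_mul] at h
    rw [← h]
    abel
  have hTN : ∀ N : ℕ, T = (∑ k ∈ Finset.range N, G ^ k) + G ^ N * T := by
    intro N
    induction N with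
    | zero => simp
    | succ N IH =>
      rw [Finset.sum_range_succ]
      calc T = (∑ k ∈ Finset.range N, G ^ k) + G ^ N * T := IH
        _ = (∑ k ∈ Finset.range N, G ^ k) + G ^ N * (1 + G * T) := by rw [← hTrec]
        _ = (∑ k ∈ Finset.range N, G ^ k) + G ^ N + G ^ (N + 1) * T := by
            rw [Matrix.mul_add, Matrix.mul_one, ← Matrix.mul_assoc, ← pow_succ]
            abel
  have hT0 : ∀ i j, 0 ≤ T i j := by
    intro i j
    by_contra hneg
    push_neg at hneg
    set ε : ℝ := -(T i j) with hε
    have hε0 : 0 < ε := by rw [hε]; linarith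
    set Ta : Matrix ι ι ℝ := Matrix.of fun i j => |T i j| with hTa
    have hTa0 : ∀ i j, 0 ≤ Ta i j := fun i j => abs_nonneg _
    have hstep : ∀ N : ℕ, ε ≤ (H ^ N * Ta) i j := by
      intro N
      have e1 : (G ^ N * T) i j = T i j - (∑ k ∈ Finset.range N, G ^ k) i j := by
        have := hTN N
        have e2 : T i j = ((∑ k ∈ Finset.range N, G ^ k) + G ^ N * T) i j := by rw [← this]
        simp only [Matrix.add_apply] at e2
        linarith
      have e3 : (∑ k ∈ Finset.range N, G ^ k) i j ≥ 0 := by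
        have : ∀ k ∈ Finset.range N, 0 ≤ (G ^ k) i j := fun k _ => pow_entry_nonneg hG0 k i j
        calc (0:ℝ) ≤ ∑ k ∈ Finset.range N, (G ^ k) i j := Finset.sum_nonneg this
          _ = _ := (Matrix.sum_apply i j _ _).symm
      have e4 : (G ^ N * T) i j ≤ T i j := by linarith
      have e5 : -((G ^ N) * Ta) i j ≤ (G ^ N * T) i j := by
        rw [Matrix.mul_apply, Matrix.mul_apply, ← Finset.sum_neg_distrib]
        refine Finset.sum_le_sum fun k _ => ?_
        have h6 : -( (G ^ N) i k * Ta k j) = (G ^ N) i k * (-(Ta k j)) := by ring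
        rw [h6]
        refine mul_le_mul_of_nonneg_left ?_ (pow_entry_nonneg hG0 N i k)
        have : -(|T k j|) ≤ T k j := neg_abs_le _
        simpa [hTa] using this
      have e6 : ((G ^ N) * Ta) i j ≤ ((H ^ N) * Ta) i j :=
        mul_entry_mono (pow_entry_nonneg hG0 N) hTa0 (pow_entry_mono hG0 hGH N)
          (fun _ _ => le_refl _) i j
      have : -((H ^ N) * Ta) i j ≤ T i j := by linarith
      rw [hε]
      linarith
    obtain ⟨M, hM⟩ := exists_nat_gt ((K * Ta) i j / ε)
    have hsumM : (M : ℝ) * ε ≤ (K * Ta) i j := by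
      have h1 : (M : ℝ) * ε = ∑ _k ∈ Finset.range M, ε := by
        rw [Finset.sum_const, Finset.card_range, nsmul_eq_mul]
      have h2 : ∑ k ∈ Finset.range M, ε ≤ ∑ k ∈ Finset.range M, (H ^ k * Ta) i j :=
        Finset.sum_le_sum fun k _ => hstep k
      have h3 : ∑ k ∈ Finset.range M, (H ^ k * Ta) i j
          = ((∑ k ∈ Finset.range M, H ^ k) * Ta) i j := by
        simp only [Matrix.mul_apply, Matrix.sum_apply, Finset.sum_apply, Finset.sum_mul]
        rw [Finset.sum_comm]
      have h4 : ((∑ k ∈ Finset.range M, H ^ k) * Ta) i j ≤ (K * Ta) i j :=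
        mul_entry_mono (fun i j => by
            have : ∀ k ∈ Finset.range M, 0 ≤ (H ^ k) i j := fun k _ => pow_entry_nonneg hH0 k i j
            calc (0:ℝ) ≤ ∑ k ∈ Finset.range M, (H ^ k) i j := Finset.sum_nonneg this
              _ = _ := (Matrix.sum_apply i j _ _).symm)
          hTa0 (hSN M) (fun _ _ => le_refl _) i j
      linarith
    rw [div_lt_iff₀ hε0] at hM
    linarith
  have hCinv : C⁻¹ = T * B⁻¹ := by
    apply Matrix.inv_eq_right_inv
    rw [hCeq, Matrix.mul_assoc, ← Matrix.mul_assoc _ T _, hT1, Matrix.one_mul,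
      Matrix.mul_nonsing_inv B hB]
  intro i j
  have hTge1 : ∀ i j, (1 : Matrix ι ι ℝ) i j ≤ T i j := by
    intro i j
    have h := mul_entry_nonneg hG0 hT0 i j
    have h7 : T i j = ((1 : Matrix ι ι ℝ) + G * T) i j := by rw [← hTrec]
    simp only [Matrix.add_apply] at h7
    linarith
  have : C⁻¹ i j - B⁻¹ i j = ((T - 1) * B⁻¹) i j := by
    rw [Matrix.sub_mul, Matrix.one_mul, hCinv]
    simp [Matrix.sub_apply]
  have h2 : 0 ≤ ((T - 1) * B⁻¹) i j :=
    mul_entry_nonneg (fun i j => by simp [Matrix.sub_apply]; linarith [hTge1 i j]) hBinv i j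
  linarith
end Kuttler

section Jacobi
variable {n : ℕ}

noncomputable def minor (M : Matrix (Fin n) (Fin n) ℝ) (s : Finset (Fin n)) : ℝ :=
  (M.submatrix (fun i : s => (i : Fin n)) (fun j : s => (j : Fin n))).det

lemma minor_univ (M : Matrix (Fin n) (Fin n) ℝ) : minor M Finset.univ = M.det := by
  unfold minor
  exact Matrix.det_submatrix_equiv_self
    (Equiv.subtypeUnivEquiv (fun x : Fin n => Finset.mem_univ x)) M

lemma minor_compl_eq (M : Matrix (Fin n) (Fin n) ℝ) (s : Finset (Fin n)) :
    minor M sᶜ = (M.submatrix (fun i : {x : Fin n // x ∉ s} => (i : Fin n))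
      (fun j : {x : Fin n // x ∉ s} => (j : Fin n))).det := by
  unfold minor
  exact Matrix.det_submatrix_equiv_self
    (⟨fun x => ⟨x.1, Finset.mem_compl.mp x.2⟩, fun x => ⟨x.1, Finset.mem_compl.mpr x.2⟩,
      fun x => rfl, fun x => rfl⟩ : {x : Fin n // x ∈ sᶜ} ≃ {x : Fin n // x ∉ s})
    (M.submatrix (fun i : {x : Fin n // x ∉ s} => (i : Fin n))
      (fun j : {x : Fin n // x ∉ s} => (j : Fin n)))

lemma jacobi_s16 (C : Matrix (Fin n) (Fin n) ℝ) (hC : IsUnit C.det) (s : Finset (Fin n))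
    (hP : IsUnit (minor C s)) :
    minor C⁻¹ sᶜ * C.det = minor C s := by
  classical
  rw [minor_compl_eq]
  set e : {x : Fin n // x ∈ s} ⊕ {x : Fin n // x ∉ s} ≃ Fin n :=
    Equiv.sumCompl (fun x => x ∈ s) with hedef
  set M : Matrix _ _ ℝ := C.submatrix e e with hM
  set M' : Matrix _ _ ℝ := (C⁻¹).submatrix e e with hM'
  have hMM' : M' * M = 1 := by
    rw [hM, hM']
    rw [show ((C⁻¹).submatrix e e : Matrix _ _ ℝ) = (C⁻¹).submatrix (⇑e) (⇑e) from rfl]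
    rw [show (C.submatrix e e : Matrix _ _ ℝ) = C.submatrix (⇑e) (⇑e) from rfl]
    rw [Matrix.submatrix_mul_equiv, Matrix.nonsing_inv_mul C hC, Matrix.submatrix_one_equiv]
  set P := M.toBlocks₁₁ with hPdef
  set Q := M.toBlocks₁₂ with hQdef
  set R := M.toBlocks₂₁ with hRdef
  set S := M.toBlocks₂₂ with hSdef
  set W := M'.toBlocks₁₁
  set X := M'.toBlocks₁₂
  set Y := M'.toBlocks₂₁
  set Z := M'.toBlocks₂₂ with hZdef
  have hMb : M = Matrix.fromBlocks P Q R S := (Matrix.fromBlocks_toBlocks M).symm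
  have hM'b : M' = Matrix.fromBlocks W X Y Z := (Matrix.fromBlocks_toBlocks M').symm
  have hmul : Matrix.fromBlocks (W * P + X * R) (W * Q + X * S) (Y * P + Z * R) (Y * Q + Z * S)
      = Matrix.fromBlocks 1 0 0 1 := by
    rw [← Matrix.fromBlocks_multiply, ← hMb, ← hM'b, hMM', Matrix.fromBlocks_one]
  have h21 : Y * P + Z * R = 0 := by
    have h := congrArg Matrix.toBlocks₂₁ hmul
    rwa [Matrix.toBlocks_fromBlocks₂₁, Matrix.toBlocks_fromBlocks₂₁] at h
  have h22 : Y * Q + Z * S = 1 := by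
    have h := congrArg Matrix.toBlocks₂₂ hmul
    rwa [Matrix.toBlocks_fromBlocks₂₂, Matrix.toBlocks_fromBlocks₂₂] at h
  have hPunit : IsUnit P.det := hP
  have hY : Y = -(Z * R * P⁻¹) := by
    have h1 : Y * P = -(Z * R) := by
      have := h21
      have h2 : Y * P = -(Z * R) + (Y * P + Z * R) := by abel
      rw [this, add_zero] at h2
      exact h2
    have h3 := congrArg (· * P⁻¹) h1
    rw [Matrix.mul_assoc, Matrix.mul_nonsing_inv P hPunit, Matrix.mul_one] at h3
    rw [h3, Matrix.neg_mul]
  have hZS : Z * (S - R * P⁻¹ * Q) = 1 := by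
    rw [Matrix.mul_sub, ← h22, hY]
    rw [Matrix.neg_mul, ← Matrix.mul_assoc, ← Matrix.mul_assoc]
    abel
  have hdetM : M.det = P.det * (S - R * P⁻¹ * Q).det := by
    haveI : Invertible P := P.invertibleOfIsUnitDet hPunit
    rw [hMb, Matrix.det_fromBlocks₁₁, Matrix.invOf_eq_nonsing_inv]
  have hdetMC : M.det = C.det := Matrix.det_submatrix_equiv_self e C
  have hdetZ : Z.det * (S - R * P⁻¹ * Q).det = 1 := by
    rw [← Matrix.det_mul, hZS, Matrix.det_one]
  have hZeq : Z = (C⁻¹).submatrix (fun i : {x : Fin n // x ∉ s} => (i : Fin n))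
      (fun j : {x : Fin n // x ∉ s} => (j : Fin n)) := rfl
  have hPeq : P = C.submatrix (fun i : s => (i : Fin n)) (fun j : s => (j : Fin n)) := rfl
  rw [← hZeq]
  show Z.det * C.det = minor C s
  rw [← hdetMC, hdetM]
  show Z.det * (P.det * (S - R * P⁻¹ * Q).det) = minor C s
  have hfin : Z.det * (P.det * (S - R * P⁻¹ * Q).det)
      = P.det * (Z.det * (S - R * P⁻¹ * Q).det) := by ring
  rw [hfin, hdetZ, mul_one]
  rfl
end Jacobi
section Hull
variable {n : ℕ} (A B : Matrix (Fin n) (Fin n) ℝ)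

lemma Dlt_eq_abs (i j : Fin n) : Dlt A B i j = |A i j - B i j| / 2 := by
  unfold Dlt Iu Il
  rw [max_sub_min_eq_abs, abs_sub_comm]

lemma mem_hull_iff (C : Matrix (Fin n) (Fin n) ℝ) :
    C ∈ IntervalHull A B ↔ ∀ i j, |C i j - Ic A B i j| ≤ Dlt A B i j := by
  constructor
  · intro hC i j
    obtain ⟨t, ⟨ht0, ht1⟩, heq⟩ := hC i j
    rw [heq, Dlt_eq_abs]
    have h1 : t * A i j + (1 - t) * B i j - Ic A B i j = (t - 1/2) * (A i j - B i j) := by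
      unfold Ic; ring
    rw [h1, abs_mul]
    have h2 : |t - 1/2| ≤ 1/2 := by
      rw [abs_le]; constructor <;> linarith
    calc |t - 1/2| * |A i j - B i j| ≤ (1/2) * |A i j - B i j| :=
          mul_le_mul_of_nonneg_right h2 (abs_nonneg _)
      _ = |A i j - B i j| / 2 := by ring
  · intro h i j
    have habs := h i j
    rw [Dlt_eq_abs, abs_le] at habs
    have hIc : Ic A B i j = (A i j + B i j) / 2 := rfl
    rcases lt_trichotomy (A i j) (B i j) with hab | hab | hab
    · have habs' : |A i j - B i j| = B i j - A i j := by
        rw [abs_of_nonpos (by linarith)]; ring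
      rw [habs', hIc] at habs
      refine ⟨(B i j - C i j) / (B i j - A i j), ⟨?_, ?_⟩, ?_⟩
      · apply div_nonneg ?_ (by linarith)
        linarith [habs.2]
      · rw [div_le_one (by linarith)]
        linarith [habs.1]
      · have hne : B i j - A i j ≠ 0 := by linarith
        field_simp
        ring
    · refine ⟨0, ⟨le_refl _, zero_le_one⟩, ?_⟩
      have h0 : |A i j - B i j| = 0 := by rw [hab]; simp
      rw [h0, hIc] at habs
      have hc : C i j = (A i j + B i j) / 2 := by
        have h1 := habs.1
        have h2 := habs.2
        linarith
      rw [hc, hab]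
      ring
    · have habs' : |A i j - B i j| = A i j - B i j := abs_of_nonneg (by linarith)
      rw [habs', hIc] at habs
      refine ⟨(C i j - B i j) / (A i j - B i j), ⟨?_, ?_⟩, ?_⟩
      · apply div_nonneg ?_ (by linarith)
        linarith [habs.1]
      · rw [div_le_one (by linarith)]
        linarith [habs.2]
      · have hne : A i j - B i j ≠ 0 := by linarith
        field_simp
        ring

lemma hull_convex {C1 C2 : Matrix (Fin n) (Fin n) ℝ} (h1 : C1 ∈ IntervalHull A B)
    (h2 : C2 ∈ IntervalHull A B) {τ : ℝ} (hτ0 : 0 ≤ τ) (hτ1 : τ ≤ 1) :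
    (Matrix.of fun i j => (1 - τ) * C1 i j + τ * C2 i j) ∈ IntervalHull A B := by
  rw [mem_hull_iff] at h1 h2 ⊢
  intro i j
  have e1 := h1 i j
  have e2 := h2 i j
  have heq : (Matrix.of fun i j => (1 - τ) * C1 i j + τ * C2 i j) i j - Ic A B i j
      = (1 - τ) * (C1 i j - Ic A B i j) + τ * (C2 i j - Ic A B i j) := by
    simp only [Matrix.of_apply]; ring
  rw [heq]
  calc |(1 - τ) * (C1 i j - Ic A B i j) + τ * (C2 i j - Ic A B i j)|
      ≤ |(1 - τ) * (C1 i j - Ic A B i j)| + |τ * (C2 i j - Ic A B i j)| := abs_add_le _ _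
    _ = (1 - τ) * |C1 i j - Ic A B i j| + τ * |C2 i j - Ic A B i j| := by
        rw [abs_mul, abs_mul, abs_of_nonneg (by linarith), abs_of_nonneg hτ0]
    _ ≤ (1 - τ) * Dlt A B i j + τ * Dlt A B i j := by
        have := mul_le_mul_of_nonneg_left e1 (by linarith : (0:ℝ) ≤ 1 - τ)
        have := mul_le_mul_of_nonneg_left e2 hτ0
        linarith
    _ = Dlt A B i j := by ring

lemma IP_apply (d : Fin n → ℝ) (i j : Fin n) :
    (Ic A B + Matrix.diagonal d * Dlt A B * Matrix.diagonal d) i j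
      = Ic A B i j + d i * Dlt A B i j * d j := by
  rw [Matrix.add_apply, Matrix.mul_diagonal, Matrix.diagonal_mul]

lemma Iz_mem_hull {z : Fin n → ℝ} (hz : SignVec z) : Iz A B z ∈ IntervalHull A B := by
  rw [mem_hull_iff]
  intro i j
  rw [Iz_apply]
  have h1 : Ic A B i j - z i * Dlt A B i j * z j - Ic A B i j = -(z i * Dlt A B i j * z j) := by
    ring
  rw [h1, abs_neg, abs_mul, abs_mul]
  rcases hz i with h | h <;> rcases hz j with h' | h' <;>
    simp [h, h', abs_of_nonneg (Dlt_nonneg A B i j)]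

lemma IP_mem_hull {d : Fin n → ℝ} (hd : SignVec d) :
    (Ic A B + Matrix.diagonal d * Dlt A B * Matrix.diagonal d) ∈ IntervalHull A B := by
  rw [mem_hull_iff]
  intro i j
  rw [IP_apply]
  have h1 : Ic A B i j + d i * Dlt A B i j * d j - Ic A B i j = d i * Dlt A B i j * d j := by
    ring
  rw [h1, abs_mul, abs_mul]
  rcases hd i with h | h <;> rcases hd j with h' | h' <;>
    simp [h, h', abs_of_nonneg (Dlt_nonneg A B i j)]

end Hull
section Conj
variable {n : ℕ}

/-- entrywise negated sign-conjugation -/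
def negconj (d : Fin n → ℝ) (M : Matrix (Fin n) (Fin n) ℝ) : Matrix (Fin n) (Fin n) ℝ :=
  Matrix.of fun i j => -(d i * d j * M i j)

lemma negconj_negconj {d : Fin n → ℝ} (hd : SignVec d) (M : Matrix (Fin n) (Fin n) ℝ) :
    negconj d (negconj d M) = M := by
  ext i j
  have h1 : d i * d i = 1 := by rcases hd i with h | h <;> rw [h] <;> norm_num
  have h2 : d j * d j = 1 := by rcases hd j with h | h <;> rw [h] <;> norm_num
  simp only [negconj, Matrix.of_apply]
  have h3 : -(d i * d j * -(d i * d j * M i j)) = (d i * d i) * ((d j * d j) * M i j) := by ring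
  rw [h3, h1, h2, one_mul, one_mul]

lemma negconj_mul {d : Fin n → ℝ} (hd : SignVec d) (M N : Matrix (Fin n) (Fin n) ℝ) :
    negconj d M * negconj d N = Matrix.of fun i j => d i * d j * (M * N) i j := by
  ext i j
  simp only [negconj, Matrix.mul_apply, Matrix.of_apply, Finset.mul_sum]
  refine Finset.sum_congr rfl fun k _ => ?_
  have h1 : d k * d k = 1 := by rcases hd k with h | h <;> rw [h] <;> norm_num
  have h3 : -(d i * d k * M i k) * -(d k * d j * N k j)
      = (d k * d k) * (d i * d j * (M i k * N k j)) := by ring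
  rw [h3, h1, one_mul]

lemma negconj_mul_eq_one {d : Fin n → ℝ} (hd : SignVec d) {M N : Matrix (Fin n) (Fin n) ℝ}
    (h : M * N = 1) : negconj d M * negconj d N = 1 := by
  rw [negconj_mul hd, h]
  ext i j
  by_cases hij : i = j
  · subst hij
    have h1 : d i * d i = 1 := by rcases hd i with h | h <;> rw [h] <;> norm_num
    simp [Matrix.one_apply, h1]
  · simp [Matrix.one_apply, hij]

lemma negconj_unit {d : Fin n → ℝ} (hd : SignVec d) {M : Matrix (Fin n) (Fin n) ℝ}
    (h : IsUnit M.det) : IsUnit (negconj d M).det :=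
  Matrix.isUnit_det_of_right_inverse (negconj_mul_eq_one hd (Matrix.mul_nonsing_inv M h))

lemma negconj_inv {d : Fin n → ℝ} (hd : SignVec d) {M : Matrix (Fin n) (Fin n) ℝ}
    (h : IsUnit M.det) : (negconj d M)⁻¹ = negconj d M⁻¹ :=
  Matrix.inv_eq_right_inv (negconj_mul_eq_one hd (Matrix.mul_nonsing_inv M h))

end Conj

section AlmostP
variable {n : ℕ}

lemma det_submatrix_inj (M : Matrix (Fin n) (Fin n) ℝ) {κ : Type} [Fintype κ] [DecidableEq κ]
    (f : κ → Fin n) (hf : Function.Injective f) :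
    (M.submatrix f f).det = minor M (Finset.image f Finset.univ) := by
  classical
  unfold minor
  have hbij : Function.Bijective
      (fun k => (⟨f k, by simp⟩ : {x : Fin n // x ∈ Finset.image f Finset.univ})) := by
    constructor
    · intro a b hab
      apply hf
      simpa [Subtype.ext_iff] using hab
    · rintro ⟨x, hx⟩
      simp only [Finset.mem_image] at hx
      obtain ⟨k, _, hk⟩ := hx
      exact ⟨k, by simp [hk]⟩
  exact Matrix.det_submatrix_equiv_self (Equiv.ofBijective _ hbij)
    (M.submatrix (fun i : {x : Fin n // x ∈ Finset.image f Finset.univ} => (i : Fin n))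
      (fun j : {x : Fin n // x ∈ Finset.image f Finset.univ} => (j : Fin n)))

lemma almostP_det_neg {V : Matrix (Fin n) (Fin n) ℝ} {J : Finset (Fin n)} (hn : 0 < n)
    (hV : IsAlmostPFirst V J) : V.det < 0 := by
  obtain ⟨hunit, hN, _⟩ := hV
  haveI : Nonempty (Fin n) := ⟨⟨0, hn⟩⟩
  have h1 : minor V⁻¹ Finset.univ < 0 := hN Finset.univ Finset.univ_nonempty
  rw [minor_univ, Matrix.det_nonsing_inv] at h1
  have h2 : V.det ≠ 0 := isUnit_iff_ne_zero.mp hunit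
  rcases lt_trichotomy V.det 0 with h | h | h
  · exact h
  · exact absurd h h2
  · exfalso
    have : 0 < (V.det)⁻¹ := inv_pos.mpr h
    rw [Ring.inverse_eq_inv'] at h1
    linarith

lemma almostP_minor_pos {V : Matrix (Fin n) (Fin n) ℝ} {J : Finset (Fin n)} (hn : 0 < n)
    (hV : IsAlmostPFirst V J) (s : Finset (Fin n)) (hs : s ≠ Finset.univ) :
    0 < minor V s := by
  obtain ⟨hunit, hN, hBP⟩ := hV
  have hdet : V.det < 0 := almostP_det_neg hn ⟨hunit, hN, hBP⟩
  have hinvunit : IsUnit (V⁻¹).det := by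
    rw [Matrix.det_nonsing_inv, isUnit_iff_ne_zero, Ring.inverse_eq_inv']
    exact inv_ne_zero (ne_of_lt hdet)
  have hsc : sᶜ.Nonempty := by
    rw [Finset.nonempty_iff_ne_empty]
    intro hc
    exact hs (by simpa [Finset.compl_eq_empty_iff] using hc)
  have hscminor : minor V⁻¹ sᶜ < 0 := hN sᶜ hsc
  have hscunit : IsUnit (minor V⁻¹ sᶜ) := isUnit_iff_ne_zero.mpr (ne_of_lt hscminor)
  have hj := jacobi_s16 V⁻¹ hinvunit sᶜ hscunit
  rw [compl_compl, Matrix.nonsing_inv_nonsing_inv V hunit] at hj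
  -- hj : minor V s * (V⁻¹).det = minor V⁻¹ sᶜ
  have hdetinv : (V⁻¹).det < 0 := by
    rw [Matrix.det_nonsing_inv, Ring.inverse_eq_inv']
    exact inv_lt_zero.mpr hdet
  nlinarith [hj, hdetinv, hscminor]

end AlmostP
section Main
variable {n : ℕ} {A B : Matrix (Fin n) (Fin n) ℝ} {J : Finset (Fin n)}

lemma sign_d (J : Finset (Fin n)) : SignVec (fun i => if i ∈ J then (1:ℝ) else -1) := fun i => by
  by_cases h : i ∈ J <;> simp [h]

lemma negconj_pos_of_pattern {M : Matrix (Fin n) (Fin n) ℝ} (hBP : BlockPattern M J) :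
    ∀ i j, 0 < negconj (fun i => if i ∈ J then (1:ℝ) else -1) M i j := by
  obtain ⟨h11, h22, h12, h21⟩ := hBP
  intro i j
  simp only [negconj, Matrix.of_apply]
  by_cases hi : i ∈ J <;> by_cases hj : j ∈ J <;> simp only [hi, hj, if_true, if_false]
  · have := h11 i hi j hj; nlinarith
  · have := h12 i hi j hj; nlinarith
  · have := h21 i hi j hj; nlinarith
  · have := h22 i hi j hj; nlinarith

lemma pattern_of_negconj {W : Matrix (Fin n) (Fin n) ℝ} (hW : ∀ i j, 0 < W i j) :
    BlockPattern (negconj (fun i => if i ∈ J then (1:ℝ) else -1) W) J := by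
  refine ⟨?_, ?_, ?_, ?_⟩ <;> intro i hi j hj <;>
    simp only [negconj, Matrix.of_apply, hi, hj, if_true, if_false] <;> nlinarith [hW i j]

lemma hull_unit_and_pattern (hIP : IsAlmostPFirst (Ic A B +
      Matrix.diagonal (fun i => if i ∈ J then (1:ℝ) else -1) * Dlt A B *
      Matrix.diagonal (fun i => if i ∈ J then (1:ℝ) else -1)) J)
    (hIzd : IsAlmostPFirst (Iz A B (fun i => if i ∈ J then (1:ℝ) else -1)) J)
    {C : Matrix (Fin n) (Fin n) ℝ} (hC : C ∈ IntervalHull A B) :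
    IsUnit C.det ∧ BlockPattern C⁻¹ J := by
  classical
  set d : Fin n → ℝ := fun i => if i ∈ J then (1:ℝ) else -1 with hddef
  have hd : SignVec d := sign_d J
  have hdd : ∀ i, d i * d i = 1 := fun i => by rcases hd i with h | h <;> rw [h] <;> norm_num
  set IP : Matrix (Fin n) (Fin n) ℝ :=
    Ic A B + Matrix.diagonal d * Dlt A B * Matrix.diagonal d with hIPdef
  set V : Matrix (Fin n) (Fin n) ℝ := Iz A B d with hVdef
  have habs : ∀ i j, |C i j - Ic A B i j| ≤ Dlt A B i j := (mem_hull_iff A B C).mp hC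
  have hL : ∀ i j, negconj d IP i j = -(d i * d j * Ic A B i j) - Dlt A B i j := by
    intro i j
    simp only [negconj, Matrix.of_apply, hIPdef, IP_apply]
    have h3 : d i * d j * (Ic A B i j + d i * Dlt A B i j * d j)
        = d i * d j * Ic A B i j + (d i * d i) * ((d j * d j) * Dlt A B i j) := by ring
    rw [h3, hdd i, hdd j]
    ring
  have hU : ∀ i j, negconj d V i j = -(d i * d j * Ic A B i j) + Dlt A B i j := by
    intro i j
    simp only [negconj, Matrix.of_apply, hVdef, Iz_apply]
    have h3 : d i * d j * (Ic A B i j - d i * Dlt A B i j * d j)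
        = d i * d j * Ic A B i j - (d i * d i) * ((d j * d j) * Dlt A B i j) := by ring
    rw [h3, hdd i, hdd j]
    ring
  have hmid : ∀ i j, |d i * d j * (C i j - Ic A B i j)| ≤ Dlt A B i j := by
    intro i j
    rw [abs_mul, abs_mul]
    rcases hd i with h | h <;> rcases hd j with h' | h' <;>
      simp [h, h', habs i j]
  have hle1 : ∀ i j, negconj d IP i j ≤ negconj d C i j := by
    intro i j
    have h1 := (abs_le.mp (hmid i j)).2
    have h2 : negconj d C i j
        = -(d i * d j * Ic A B i j) - d i * d j * (C i j - Ic A B i j) := by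
      simp only [negconj, Matrix.of_apply]; ring
    rw [hL i j, h2]
    linarith
  have hle2 : ∀ i j, negconj d C i j ≤ negconj d V i j := by
    intro i j
    have h1 := (abs_le.mp (hmid i j)).1
    have h2 : negconj d C i j
        = -(d i * d j * Ic A B i j) - d i * d j * (C i j - Ic A B i j) := by
      simp only [negconj, Matrix.of_apply]; ring
    rw [hU i j, h2]
    linarith
  have hLunit : IsUnit (negconj d IP).det := negconj_unit hd hIP.1
  have hUunit : IsUnit (negconj d V).det := negconj_unit hd hIzd.1
  have hLinv0 : ∀ i j, 0 ≤ (negconj d IP)⁻¹ i j := by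
    rw [negconj_inv hd hIP.1]
    exact fun i j => le_of_lt (negconj_pos_of_pattern hIP.2.2 i j)
  have hUinvpos : ∀ i j, 0 < (negconj d V)⁻¹ i j := by
    rw [negconj_inv hd hIzd.1]
    exact negconj_pos_of_pattern hIzd.2.2
  obtain ⟨hCunit', hCinv'⟩ := kuttler_s16 hle1 hle2 hLunit hUunit hLinv0
    (fun i j => le_of_lt (hUinvpos i j))
  have hCpos : ∀ i j, 0 < (negconj d C)⁻¹ i j :=
    fun i j => lt_of_lt_of_le (hUinvpos i j) (hCinv' i j)
  have hCC : C = negconj d (negconj d C) := (negconj_negconj hd C).symm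
  have hCunit : IsUnit C.det := by
    rw [hCC]
    exact negconj_unit hd hCunit'
  have hCinveq : C⁻¹ = negconj d ((negconj d C)⁻¹) := by
    conv_lhs => rw [hCC]
    exact negconj_inv hd hCunit'
  refine ⟨hCunit, ?_⟩
  rw [hCinveq]
  exact pattern_of_negconj hCpos

lemma hull_minor_ne_zero (hn : 0 < n)
    (hIz : ∀ z : Fin n → ℝ, SignVec z → IsAlmostPFirst (Iz A B z) J)
    {C : Matrix (Fin n) (Fin n) ℝ} (hC : C ∈ IntervalHull A B)
    (s : Finset (Fin n)) (hs : s ≠ Finset.univ) : minor C s ≠ 0 := by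
  classical
  intro hdet
  unfold minor at hdet
  obtain ⟨x, hx0, hker⟩ := (Matrix.exists_mulVec_eq_zero_iff).mpr hdet
  set y : Fin n → ℝ := fun i => if h : i ∈ s then x ⟨i, h⟩ else 0 with hydef
  set s' : Finset (Fin n) := s.filter (fun i => y i ≠ 0) with hs'def
  have hs's : s' ⊆ s := Finset.filter_subset _ _
  have hs'u : s' ≠ Finset.univ := by
    intro h
    exact hs (Finset.univ_subset_iff.mp (h ▸ hs's))
  obtain ⟨k, hk⟩ : ∃ k : {i // i ∈ s}, x k ≠ 0 := by
    by_contra hcon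
    push_neg at hcon
    exact hx0 (funext hcon)
  have hyk : y (k : Fin n) ≠ 0 := by
    rw [hydef]
    simp only
    rw [dif_pos k.2]
    simpa using hk
  have hks' : (k : Fin n) ∈ s' := Finset.mem_filter.mpr ⟨k.2, hyk⟩
  have hsum : ∀ i ∈ s', ∑ j ∈ s', C i j * y j = 0 := by
    intro i hi
    have hi_s : i ∈ s := hs's hi
    have h1 : ∑ j ∈ s, C i j * y j = 0 := by
      have h2 := congrFun hker ⟨i, hi_s⟩
      rw [Matrix.mulVec, dotProduct] at h2
      rw [← Finset.sum_coe_sort s (fun j => C i j * y j)]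
      have h3 : ∀ j : {a // a ∈ s}, C i (j : Fin n) * y (j : Fin n)
          = C i (j : Fin n) * x j := by
        intro j
        rw [hydef]
        simp only
        rw [dif_pos j.2]
      rw [Finset.sum_congr rfl (fun j _ => h3 j)]
      exact h2
    rw [hs'def, Finset.sum_filter_of_ne, h1]
    intro j _ hne hyj
    exact hne (by rw [hyj, mul_zero])
  set z : Fin n → ℝ := fun i => if 0 ≤ y i then (1:ℝ) else -1 with hzdef
  have hz : SignVec z := fun i => by by_cases h : 0 ≤ y i <;> simp [hzdef, h]
  have hzy : ∀ i, z i * y i = |y i| := by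
    intro i
    by_cases h : 0 ≤ y i
    · rw [hzdef]; simp only [if_pos h, one_mul]; rw [abs_of_nonneg h]
    · push_neg at h
      rw [hzdef]; simp only [if_neg (not_le.mpr h)]; rw [abs_of_neg h]; ring
  have habs := (mem_hull_iff A B C).mp hC
  haveI : Nonempty {a // a ∈ s'} := ⟨⟨(k : Fin n), hks'⟩⟩
  apply pminor_no_reversal
    ((Iz A B z).submatrix (fun a : {a // a ∈ s'} => (a : Fin n))
      (fun a : {a // a ∈ s'} => (a : Fin n)))
    ?_ (fun j : {a // a ∈ s'} => y (j : Fin n)) ?_ ?_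
  · -- PMinor
    intro κ _ _ f hf
    have hinj : Function.Injective
        ((fun a : {a // a ∈ s'} => (a : Fin n)) ∘ f) := Subtype.coe_injective.comp hf
    have hdetr : ((Iz A B z).submatrix ((fun a : {a // a ∈ s'} => (a : Fin n)) ∘ f)
        ((fun a : {a // a ∈ s'} => (a : Fin n)) ∘ f)).det
        = minor (Iz A B z) (Finset.image ((fun a : {a // a ∈ s'} => (a : Fin n)) ∘ f)
            Finset.univ) := det_submatrix_inj _ _ hinj
    rw [Matrix.submatrix_submatrix, hdetr]
    apply almostP_minor_pos hn (hIz z hz)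
    have himg : Finset.image ((fun a : {a // a ∈ s'} => (a : Fin n)) ∘ f) Finset.univ ⊆ s' := by
      intro a ha
      simp only [Finset.mem_image] at ha
      obtain ⟨kk, _, hkk⟩ := ha
      rw [← hkk]
      exact (f kk).2
    intro hu
    exact hs'u (Finset.univ_subset_iff.mp (hu ▸ himg))
  · -- all entries nonzero
    intro j
    exact (Finset.mem_filter.mp j.2).2
  · -- reversal
    intro i
    rw [Matrix.mulVec, dotProduct, Finset.mul_sum]
    have h1 : ∀ j : {a // a ∈ s'},
        y (i : Fin n) * ((Iz A B z) (i : Fin n) (j : Fin n) * y (j : Fin n))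
          ≤ y (i : Fin n) * (C (i : Fin n) (j : Fin n) * y (j : Fin n)) := by
      intro j
      rw [Iz_apply]
      have e1 : y (i:Fin n) * ((Ic A B (i:Fin n) (j:Fin n)
            - z (i:Fin n) * Dlt A B (i:Fin n) (j:Fin n) * z (j:Fin n)) * y (j:Fin n))
          = y (i:Fin n) * (Ic A B (i:Fin n) (j:Fin n) * y (j:Fin n))
            - (z (i:Fin n) * y (i:Fin n)) * (z (j:Fin n) * y (j:Fin n))
              * Dlt A B (i:Fin n) (j:Fin n) := by ring
      have e2 : y (i:Fin n) * (C (i:Fin n) (j:Fin n) * y (j:Fin n))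
          = y (i:Fin n) * (Ic A B (i:Fin n) (j:Fin n) * y (j:Fin n))
            + (C (i:Fin n) (j:Fin n) - Ic A B (i:Fin n) (j:Fin n))
              * (y (i:Fin n) * y (j:Fin n)) := by ring
      rw [e1, e2, hzy, hzy]
      have e4 : |(C (i:Fin n) (j:Fin n) - Ic A B (i:Fin n) (j:Fin n))
          * (y (i:Fin n) * y (j:Fin n))|
          ≤ Dlt A B (i:Fin n) (j:Fin n) * (|y (i:Fin n)| * |y (j:Fin n)|) := by
        rw [abs_mul, abs_mul]
        exact mul_le_mul_of_nonneg_right (habs _ _) (by positivity)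
      have e5 := neg_abs_le ((C (i:Fin n) (j:Fin n) - Ic A B (i:Fin n) (j:Fin n))
          * (y (i:Fin n) * y (j:Fin n)))
      nlinarith [e4, e5]
    have h2 : ∑ j : {a // a ∈ s'}, y (i:Fin n) * (C (i:Fin n) (j:Fin n) * y (j:Fin n)) = 0 := by
      rw [← Finset.mul_sum]
      have h3 := hsum (i : Fin n) i.2
      rw [← Finset.sum_coe_sort s' (fun j => C (i:Fin n) j * y j)] at h3
      rw [h3, mul_zero]
    calc ∑ j : {a // a ∈ s'}, y (i:Fin n) * ((Iz A B z) (i:Fin n) (j:Fin n) * y (j:Fin n))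
        ≤ ∑ j : {a // a ∈ s'}, y (i:Fin n) * (C (i:Fin n) (j:Fin n) * y (j:Fin n)) :=
          Finset.sum_le_sum (fun j _ => h1 j)
      _ = 0 := h2

end Main
section Final
variable {n : ℕ} {A B : Matrix (Fin n) (Fin n) ℝ} {J : Finset (Fin n)}

lemma sign_neg_propagate {g : ℝ → ℝ} (hg : Continuous g) (h0 : g 0 < 0)
    (hne : ∀ τ ∈ Set.Icc (0:ℝ) 1, g τ ≠ 0) : g 1 < 0 := by
  by_contra h
  push_neg at h
  have h1 : (0:ℝ) ∈ Set.Icc (g 0) (g 1) := ⟨le_of_lt h0, h⟩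
  obtain ⟨τ, hτ, hgτ⟩ := intermediate_value_Icc (by norm_num : (0:ℝ) ≤ 1)
    hg.continuousOn h1
  exact hne τ hτ hgτ

lemma sign_pos_propagate {g : ℝ → ℝ} (hg : Continuous g) (h0 : 0 < g 0)
    (hne : ∀ τ ∈ Set.Icc (0:ℝ) 1, g τ ≠ 0) : 0 < g 1 := by
  by_contra h
  push_neg at h
  have h1 : (0:ℝ) ∈ Set.Icc (g 1) (g 0) := ⟨h, le_of_lt h0⟩
  obtain ⟨τ, hτ, hgτ⟩ := intermediate_value_Icc' (by norm_num : (0:ℝ) ≤ 1)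
    hg.continuousOn h1
  exact hne τ hτ hgτ

lemma continuous_minor_path (V C : Matrix (Fin n) (Fin n) ℝ) (s : Finset (Fin n)) :
    Continuous fun τ : ℝ => minor (Matrix.of fun i j => (1 - τ) * V i j + τ * C i j) s := by
  unfold minor
  apply Continuous.matrix_det
  apply continuous_matrix
  intro i j
  show Continuous fun τ : ℝ => (1 - τ) * V (i : Fin n) (j : Fin n) + τ * C (i : Fin n) (j : Fin n)
  continuity

lemma continuous_det_path (V C : Matrix (Fin n) (Fin n) ℝ) :
    Continuous fun τ : ℝ => (Matrix.of fun i j => (1 - τ) * V i j + τ * C i j).det := by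
  apply Continuous.matrix_det
  apply continuous_matrix
  intro i j
  show Continuous fun τ : ℝ => (1 - τ) * V i j + τ * C i j
  continuity

lemma path_zero (V C : Matrix (Fin n) (Fin n) ℝ) :
    (Matrix.of fun i j => (1 - (0:ℝ)) * V i j + 0 * C i j) = V := by
  ext i j; simp

lemma path_one (V C : Matrix (Fin n) (Fin n) ℝ) :
    (Matrix.of fun i j => (1 - (1:ℝ)) * V i j + 1 * C i j) = C := by
  ext i j; simp

lemma hull_almostP (hJ : J.Nonempty)
    (hIP : IsAlmostPFirst (Ic A B +
      Matrix.diagonal (fun i => if i ∈ J then (1:ℝ) else -1) * Dlt A B *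
      Matrix.diagonal (fun i => if i ∈ J then (1:ℝ) else -1)) J)
    (hIz : ∀ z : Fin n → ℝ, SignVec z → IsAlmostPFirst (Iz A B z) J) :
    ∀ C ∈ IntervalHull A B, IsAlmostPFirst C J := by
  intro C hC
  obtain ⟨i0, _⟩ := hJ
  have hn : 0 < n := i0.pos
  have hd : SignVec (fun i => if i ∈ J then (1:ℝ) else -1) := sign_d J
  set V : Matrix (Fin n) (Fin n) ℝ := Iz A B (fun i => if i ∈ J then (1:ℝ) else -1) with hVdef
  have hIzd : IsAlmostPFirst V J := hIz _ hd
  have hVmem : V ∈ IntervalHull A B := Iz_mem_hull A B hd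
  have hpathmem : ∀ τ ∈ Set.Icc (0:ℝ) 1,
      (Matrix.of fun i j => (1 - τ) * V i j + τ * C i j) ∈ IntervalHull A B := by
    intro τ hτ
    exact hull_convex A B hVmem hC hτ.1 hτ.2
  -- all proper minors of C are positive
  have hminor : ∀ s : Finset (Fin n), s ≠ Finset.univ → 0 < minor C s := by
    intro s hs
    have h1 : (fun τ : ℝ => minor (Matrix.of fun i j => (1 - τ) * V i j + τ * C i j) s) 1
        = minor C s := by
      show minor (Matrix.of fun i j => (1 - (1:ℝ)) * V i j + 1 * C i j) s = minor C s
      rw [path_one]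
    rw [← h1]
    apply sign_pos_propagate (continuous_minor_path V C s)
    · rw [path_zero]
      exact almostP_minor_pos hn hIzd s hs
    · intro τ hτ
      exact hull_minor_ne_zero hn hIz (hpathmem τ hτ) s hs
  -- determinant of C is negative
  have hdet : C.det < 0 := by
    have h1 : (fun τ : ℝ => (Matrix.of fun i j => (1 - τ) * V i j + τ * C i j).det) 1
        = C.det := by
      show (Matrix.of fun i j => (1 - (1:ℝ)) * V i j + 1 * C i j).det = C.det
      rw [path_one]
    rw [← h1]
    apply sign_neg_propagate (continuous_det_path V C)
    · rw [path_zero]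
      exact almostP_det_neg hn hIzd
    · intro τ hτ
      exact isUnit_iff_ne_zero.mp (hull_unit_and_pattern hIP hIzd (hpathmem τ hτ)).1
  obtain ⟨hCunit, hBP⟩ := hull_unit_and_pattern hIP hIzd hC
  refine ⟨hCunit, ?_, hBP⟩
  intro s hsne
  show minor C⁻¹ s < 0
  have hscu : sᶜ ≠ Finset.univ := by
    intro h
    obtain ⟨j0, hj0⟩ := hsne
    have hmem : j0 ∈ sᶜ := h ▸ Finset.mem_univ j0
    exact (Finset.mem_compl.mp hmem) hj0
  have hpos := hminor sᶜ hscu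
  have hj := jacobi_s16 C hCunit sᶜ (isUnit_iff_ne_zero.mpr (ne_of_gt hpos))
  rw [compl_compl] at hj
  by_contra h
  push_neg at h
  have hle : minor C⁻¹ s * C.det ≤ 0 := mul_nonpos_of_nonneg_of_nonpos h (le_of_lt hdet)
  linarith

end Final


theorem stmt16 {n : ℕ} (A B : Matrix (Fin n) (Fin n) ℝ) (J : Finset (Fin n))
    (hJ : J.Nonempty) (hJ2 : J ≠ Finset.univ) :
    (∀ C ∈ IntervalHull A B, IsAlmostPFirst C J) ↔
      (IsAlmostPFirst
          (Ic A B + Matrix.diagonal (fun i => if i ∈ J then (1:ℝ) else -1) * Dlt A B *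
            Matrix.diagonal (fun i => if i ∈ J then (1:ℝ) else -1)) J ∧
        ∀ z : Fin n → ℝ, SignVec z → IsAlmostPFirst (Iz A B z) J) := by
  constructor
  · intro hall
    exact ⟨hall _ (IP_mem_hull A B (sign_d J)), fun z hz => hall _ (Iz_mem_hull A B hz)⟩
  · rintro ⟨hIP, hIz⟩
    exact hull_almostP hJ hIP hIz
end

section
/- Let A, B ∈ ℝ^{m×n} and let (I_l)_{ij} = min(a_{ij}, b_{ij}). Then every matrix in the interval hull I(A,B) is semipositive if and only if I_l is semipositive. -/
open Matrix Finset

theorem stmt17 {m n : ℕ} (A B : Matrix (Fin m) (Fin n) ℝ) :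
    (∀ C ∈ IntervalHull A B, Semipos C) ↔ Semipos (Il A B) := by
  constructor
  · intro h
    apply h
    intro i j
    rcases le_total (A i j) (B i j) with hab | hab
    · exact ⟨1, ⟨zero_le_one, le_refl 1⟩, by simp [Il, min_eq_left hab]⟩
    · exact ⟨0, ⟨le_refl 0, zero_le_one⟩, by simp [Il, min_eq_right hab]⟩
  · rintro ⟨x, hx, hpos⟩ C hC
    refine ⟨x, hx, fun i => lt_of_lt_of_le (hpos i) ?_⟩
    unfold Matrix.mulVec dotProduct
    apply Finset.sum_le_sum
    intro j _
    apply mul_le_mul_of_nonneg_right _ (hx j)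
    obtain ⟨t, ⟨ht0, ht1⟩, hCt⟩ := hC i j
    show Il A B i j ≤ C i j
    rw [hCt]
    have h1 : min (A i j) (B i j) ≤ A i j := min_le_left _ _
    have h2 : min (A i j) (B i j) ≤ B i j := min_le_right _ _
    simp only [Il]
    nlinarith
end

section
/- Let A, B ∈ ℝ^{m×n} with I_l, I_u the entrywise min and max of A and B. Then every matrix in the interval hull I(A,B) is minimally semipositive if and only if I_l is semipositive and I_u is minimally semipositive. -/
open Matrix Finset

lemma semipos_mono {p q : Type*} [Fintype q] (M N : Matrix p q ℝ)
    (h : ∀ i j, N i j ≤ M i j) (hN : Semipos N) : Semipos M := by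
  obtain ⟨x, hx, hpos⟩ := hN
  refine ⟨x, hx, fun i => lt_of_lt_of_le (hpos i) ?_⟩
  unfold Matrix.mulVec dotProduct
  exact Finset.sum_le_sum fun j _ => mul_le_mul_of_nonneg_right (h i j) (hx j)

lemma Il_mem {m n : ℕ} (A B : Matrix (Fin m) (Fin n) ℝ) : Il A B ∈ IntervalHull A B := by
  intro i j
  rcases le_total (A i j) (B i j) with h | h
  · exact ⟨1, ⟨zero_le_one, le_refl 1⟩, by simp [Il, min_eq_left h]⟩
  · exact ⟨0, ⟨le_refl 0, zero_le_one⟩, by simp [Il, min_eq_right h]⟩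

lemma Iu_mem {m n : ℕ} (A B : Matrix (Fin m) (Fin n) ℝ) : Iu A B ∈ IntervalHull A B := by
  intro i j
  rcases le_total (A i j) (B i j) with h | h
  · exact ⟨0, ⟨le_refl 0, zero_le_one⟩, by simp [Iu, max_eq_right h]⟩
  · exact ⟨1, ⟨zero_le_one, le_refl 1⟩, by simp [Iu, max_eq_left h]⟩

lemma mem_bounds {m n : ℕ} {A B C : Matrix (Fin m) (Fin n) ℝ} (hC : C ∈ IntervalHull A B)
    (i : Fin m) (j : Fin n) : Il A B i j ≤ C i j ∧ C i j ≤ Iu A B i j := by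
  obtain ⟨t, ⟨ht0, ht1⟩, hc⟩ := hC i j
  have h1 : (0:ℝ) ≤ 1 - t := by linarith
  have ha : Il A B i j ≤ A i j := min_le_left _ _
  have hb : Il A B i j ≤ B i j := min_le_right _ _
  have ha' : A i j ≤ Iu A B i j := le_max_left _ _
  have hb' : B i j ≤ Iu A B i j := le_max_right _ _
  rw [hc]
  constructor
  · nlinarith [mul_le_mul_of_nonneg_left ha ht0, mul_le_mul_of_nonneg_left hb h1]
  · nlinarith [mul_le_mul_of_nonneg_left ha' ht0, mul_le_mul_of_nonneg_left hb' h1]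

theorem stmt18 {m n : ℕ} (A B : Matrix (Fin m) (Fin n) ℝ) :
    (∀ C ∈ IntervalHull A B, MinSemipos C) ↔
      (Semipos (Il A B) ∧ MinSemipos (Iu A B)) := by
  constructor
  · intro h
    refine ⟨(h _ (Il_mem A B)).1, h _ (Iu_mem A B)⟩
  · rintro ⟨hIl, hIuS, hIuM⟩ C hC
    constructor
    · exact semipos_mono C (Il A B) (fun i j => (mem_bounds hC i j).1) hIl
    · intro j₀ hsp
      exact hIuM j₀ (semipos_mono _ _ (fun i j => (mem_bounds hC i j.1).2) hsp)
end

section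
/- Let B, C ∈ ℝ^{n×n} with C ≤ B entrywise, B invertible, and B^{-1} ≥ 0 entrywise. Then C is invertible with C^{-1} ≥ 0 if and only if there exists x ≥ 0 with Cx > 0 (entrywise). -/
open Matrix Finset

open Filter Topology

section aux
variable {n : ℕ}

lemma entry_mul_nonneg {A B : Matrix (Fin n) (Fin n) ℝ}
    (hA : ∀ i j, 0 ≤ A i j) (hB : ∀ i j, 0 ≤ B i j) : ∀ i j, 0 ≤ (A * B) i j := by
  intro i j
  rw [Matrix.mul_apply]
  exact Finset.sum_nonneg fun k _ => mul_nonneg (hA i k) (hB k j)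

lemma entry_pow_nonneg {N : Matrix (Fin n) (Fin n) ℝ}
    (hN : ∀ i j, 0 ≤ N i j) : ∀ m i j, 0 ≤ (N ^ m) i j := by
  intro m
  induction m with
  | zero => intro i j; rw [pow_zero]; by_cases h : i = j <;> simp [Matrix.one_apply, h]
  | succ m ih => simpa [pow_succ] using entry_mul_nonneg ih hN

lemma mulVec_le_mulVec {N : Matrix (Fin n) (Fin n) ℝ} {u v : Fin n → ℝ}
    (hN : ∀ i j, 0 ≤ N i j) (huv : ∀ j, u j ≤ v j) (i : Fin n) :
    N.mulVec u i ≤ N.mulVec v i := by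
  simp only [Matrix.mulVec, dotProduct]
  exact Finset.sum_le_sum fun j _ => mul_le_mul_of_nonneg_left (huv j) (hN i j)

lemma key_neumann (N : Matrix (Fin n) (Fin n) ℝ) (hN : ∀ i j, 0 ≤ N i j)
    (x : Fin n → ℝ) (hx : ∀ i, 0 < x i) (hNx : ∀ i, N.mulVec x i < x i) :
    ∃ S : Matrix (Fin n) (Fin n) ℝ, (1 - N) * S = 1 ∧ ∀ i j, 0 ≤ S i j := by
  rcases Nat.eq_zero_or_pos n with hn | hn
  · subst hn
    exact ⟨1, by ext i j; exact i.elim0, fun i j => i.elim0⟩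
  haveI : Nonempty (Fin n) := Fin.pos_iff_nonempty.mp hn
  set r : ℝ := Finset.univ.sup' Finset.univ_nonempty (fun i => N.mulVec x i / x i) with hr
  have hr1 : r < 1 := by
    rw [hr, Finset.sup'_lt_iff]
    intro i _
    exact (div_lt_one (hx i)).mpr (hNx i)
  have hr0 : 0 ≤ r := by
    obtain ⟨i⟩ := ‹Nonempty (Fin n)›
    refine le_trans ?_ (Finset.le_sup' _ (Finset.mem_univ i))
    have h0 : 0 ≤ N.mulVec x i := by
      simp only [Matrix.mulVec, dotProduct]
      exact Finset.sum_nonneg fun j _ => mul_nonneg (hN i j) (hx j).le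
    exact div_nonneg h0 (hx i).le
  have hNxr : ∀ i, N.mulVec x i ≤ r * x i := by
    intro i
    have h := Finset.le_sup' (fun i => N.mulVec x i / x i) (Finset.mem_univ i)
    rw [div_le_iff₀ (hx i)] at h
    rw [hr]; linarith
  have hpow : ∀ m i, (N ^ m).mulVec x i ≤ r ^ m * x i := by
    intro m
    induction m with
    | zero => intro i; simp [Matrix.one_mulVec]
    | succ m ih =>
      intro i
      rw [pow_succ', ← Matrix.mulVec_mulVec]
      calc N.mulVec ((N ^ m).mulVec x) i ≤ N.mulVec (fun j => r ^ m * x j) i :=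
            mulVec_le_mulVec hN ih i
        _ = r ^ m * N.mulVec x i := by
            simp only [Matrix.mulVec, dotProduct, Finset.mul_sum]
            exact Finset.sum_congr rfl fun j _ => by ring
        _ ≤ r ^ m * (r * x i) :=
            mul_le_mul_of_nonneg_left (hNxr i) (pow_nonneg hr0 m)
        _ = r ^ (m + 1) * x i := by ring
  have hentry : ∀ m i j, (N ^ m) i j ≤ r ^ m * x i / x j := by
    intro m i j
    have h1 : (N ^ m) i j * x j ≤ (N ^ m).mulVec x i := by
      simp only [Matrix.mulVec, dotProduct]
      exact Finset.single_le_sum (f := fun k => (N ^ m) i k * x k)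
        (fun k _ => mul_nonneg (entry_pow_nonneg hN m i k) (hx k).le) (Finset.mem_univ j)
    rw [le_div_iff₀ (hx j)]
    exact h1.trans (hpow m i)
  have hpow0 : ∀ i j, Tendsto (fun m => (N ^ m) i j) atTop (𝓝 0) := by
    intro i j
    have hlim : Tendsto (fun m => r ^ m * x i / x j) atTop (𝓝 0) := by
      have := (tendsto_pow_atTop_nhds_zero_of_lt_one hr0 hr1).mul_const (x i / x j)
      simpa [mul_div_assoc] using this
    exact squeeze_zero (fun m => entry_pow_nonneg hN m i j) (fun m => hentry m i j) hlim
  set S : ℕ → Matrix (Fin n) (Fin n) ℝ := fun m => ∑ k ∈ Finset.range m, N ^ k with hSdef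
  have hSapp : ∀ m i j, S m i j = ∑ k ∈ Finset.range m, (N ^ k) i j := by
    intro m i j; rw [hSdef]; exact Matrix.sum_apply i j _ _
  have hSnn : ∀ m i j, 0 ≤ S m i j := by
    intro m i j
    rw [hSapp]
    exact Finset.sum_nonneg fun k _ => entry_pow_nonneg hN k i j
  have hSmono : ∀ i j, Monotone fun m => S m i j := by
    intro i j a b hab
    simp only [hSapp]
    exact Finset.sum_le_sum_of_subset_of_nonneg (Finset.range_subset_range.mpr hab)
      (fun k _ _ => entry_pow_nonneg hN k i j)
  have hgeom : ∀ m, ∑ k ∈ Finset.range m, r ^ k ≤ 1 / (1 - r) := by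
    intro m
    rw [le_div_iff₀ (by linarith)]
    have h := mul_neg_geom_sum (x := r) (n := m)
    nlinarith [pow_nonneg hr0 m, mul_comm (∑ k ∈ Finset.range m, r ^ k) (1 - r)]
  have hSbdd : ∀ i j, BddAbove (Set.range fun m => S m i j) := by
    intro i j
    refine ⟨(1 / (1 - r)) * x i / x j, ?_⟩
    rintro _ ⟨m, rfl⟩
    show S m i j ≤ _
    rw [hSapp]
    calc ∑ k ∈ Finset.range m, (N ^ k) i j ≤ ∑ k ∈ Finset.range m, r ^ k * x i / x j :=
          Finset.sum_le_sum fun k _ => hentry k i j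
      _ = (∑ k ∈ Finset.range m, r ^ k) * x i / x j := by
          rw [Finset.sum_mul, Finset.sum_div]
      _ ≤ (1 / (1 - r)) * x i / x j := by
          gcongr
          · exact (hx j).le
          · exact (hx i).le
          · exact hgeom m
  set T : Matrix (Fin n) (Fin n) ℝ := fun i j => ⨆ m, S m i j with hTdef
  have hTlim : ∀ i j, Tendsto (fun m => S m i j) atTop (𝓝 (T i j)) := fun i j =>
    tendsto_atTop_ciSup (hSmono i j) (hSbdd i j)
  have hTnn : ∀ i j, 0 ≤ T i j := fun i j =>
    le_of_tendsto_of_tendsto tendsto_const_nhds (hTlim i j)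
      (Filter.Eventually.of_forall fun m => hSnn m i j)
  refine ⟨T, ?_, hTnn⟩
  ext i j
  have hleft : Tendsto (fun m => ((1 - N) * S m) i j) atTop (𝓝 (((1 - N) * T) i j)) := by
    simp only [Matrix.mul_apply]
    exact tendsto_finset_sum _ fun k _ => (hTlim k j).const_mul _
  have hright : Tendsto (fun m => ((1 - N) * S m) i j) atTop (𝓝 ((1 : Matrix (Fin n) (Fin n) ℝ) i j)) := by
    have heq : ∀ m, ((1 - N) * S m) i j = (1 : Matrix (Fin n) (Fin n) ℝ) i j - (N ^ m) i j := by
      intro m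
      have : (1 - N) * S m = 1 - N ^ m := mul_neg_geom_sum (x := N) (n := m)
      rw [this, Matrix.sub_apply]
    simp only [heq]
    simpa using tendsto_const_nhds.sub (hpow0 i j)
  exact tendsto_nhds_unique hleft hright

end aux

theorem stmt19 {n : ℕ} (B C : Matrix (Fin n) (Fin n) ℝ)
    (hle : ∀ i j, C i j ≤ B i j) (hB : IsUnit B.det) (hBinv : ∀ i j, 0 ≤ B⁻¹ i j) :
    (IsUnit C.det ∧ ∀ i j, 0 ≤ C⁻¹ i j) ↔
      ∃ x : Fin n → ℝ, (∀ j, 0 ≤ x j) ∧ ∀ i, 0 < C.mulVec x i := by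
  constructor
  · rintro ⟨hC, hCinv⟩
    refine ⟨C⁻¹.mulVec (fun _ => 1), ?_, ?_⟩
    · intro j
      simp only [Matrix.mulVec, dotProduct, mul_one]
      exact Finset.sum_nonneg fun k _ => hCinv j k
    · intro i
      rw [Matrix.mulVec_mulVec, Matrix.mul_nonsing_inv _ hC, Matrix.one_mulVec]
      exact one_pos
  · rintro ⟨x, hx0, hCx⟩
    set N := B⁻¹ * (B - C) with hNdef
    have hNnn : ∀ i j, 0 ≤ N i j := by
      intro i j
      rw [hNdef, Matrix.mul_apply]
      refine Finset.sum_nonneg fun k _ => mul_nonneg (hBinv i k) ?_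
      simp only [Matrix.sub_apply, sub_nonneg]
      exact hle k j
    have hM : B⁻¹ * C = 1 - N := by
      rw [hNdef, Matrix.mul_sub, Matrix.nonsing_inv_mul _ hB]
      abel
    have hy : ∀ i, 0 < B⁻¹.mulVec (C.mulVec x) i := by
      intro i
      have hrow : ∃ k, B⁻¹ i k ≠ 0 := by
        by_contra h
        push_neg at h
        have h1 : (B⁻¹ * B) i i = 1 := by
          rw [Matrix.nonsing_inv_mul _ hB, Matrix.one_apply_eq]
        rw [Matrix.mul_apply] at h1
        simp [h] at h1
      obtain ⟨k, hk⟩ := hrow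
      simp only [Matrix.mulVec, dotProduct]
      refine Finset.sum_pos' (fun l _ => mul_nonneg (hBinv i l) (hCx l).le)
        ⟨k, Finset.mem_univ k, ?_⟩
      exact mul_pos (lt_of_le_of_ne (hBinv i k) (Ne.symm hk)) (hCx k)
    have hyM : (1 - N).mulVec x = B⁻¹.mulVec (C.mulVec x) := by
      rw [← hM, ← Matrix.mulVec_mulVec]
    have hNx : ∀ i, N.mulVec x i < x i := by
      intro i
      have h1 : (1 - N).mulVec x i = x i - N.mulVec x i := by
        rw [Matrix.sub_mulVec, Matrix.one_mulVec, Pi.sub_apply]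
      have h2 : 0 < (1 - N).mulVec x i := by rw [hyM]; exact hy i
      rw [h1] at h2
      linarith
    have hxpos : ∀ i, 0 < x i := by
      intro i
      have hNxnn : 0 ≤ N.mulVec x i := by
        simp only [Matrix.mulVec, dotProduct]
        exact Finset.sum_nonneg fun k _ => mul_nonneg (hNnn i k) (hx0 k)
      linarith [hNx i]
    obtain ⟨S, hS1, hSnn⟩ := key_neumann N hNnn x hxpos hNx
    have hdetM : IsUnit (1 - N).det := by
      have h := congrArg Matrix.det hS1
      rw [Matrix.det_mul, Matrix.det_one] at h
      exact IsUnit.of_mul_eq_one _ h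
    have hMinv : (1 - N)⁻¹ = S := Matrix.inv_eq_right_inv hS1
    have hCeq : C = B * (1 - N) := by
      rw [← hM, ← Matrix.mul_assoc, Matrix.mul_nonsing_inv _ hB, Matrix.one_mul]
    constructor
    · rw [hCeq, Matrix.det_mul]
      exact hB.mul hdetM
    · intro i j
      rw [hCeq, Matrix.mul_inv_rev, hMinv, Matrix.mul_apply]
      exact Finset.sum_nonneg fun k _ => mul_nonneg (hSnn i k) (hBinv k j)
end
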